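/- arXiv:1604.08076 — 11 statements merged into one kernel-verified Lean document; each statement's English description precedes it below -/
import Mathlib

section
/- The image of the range map 𝒯₂ equals Q₂. Moreover, for (𝒯₁,𝒯₂) ∈ Q₂, the fiber 𝒯₂⁻¹(𝒯₁,𝒯₂) has exactly two elements if (𝒯₁,𝒯₂) lies in the topological interior of Q₂, and exactly one element if (𝒯₁,𝒯₂) lies in the topological boundary of Q₂ (i.e. one of the three defining inequalities holds with equality). -/
noncomputable def pt (a b : ℝ) : EuclideanSpace ℝ (Fin 2) := WithLp.toLp 2 ![a, b]

lemma pt0 (a b : ℝ) : pt a b 0 = a := rfl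
lemma pt1 (a b : ℝ) : pt a b 1 = b := rfl

lemma eq_pt_iff (x : EuclideanSpace ℝ (Fin 2)) (a b : ℝ) :
    x = pt a b ↔ (x 0 = a ∧ x 1 = b) := by
  constructor
  · rintro rfl; exact ⟨rfl, rfl⟩
  · rintro ⟨h0, h1⟩
    ext i
    fin_cases i
    · exact h0
    · exact h1

lemma norm_sq_eq (v : EuclideanSpace ℝ (Fin 2)) : ‖v‖^2 = (v 0)^2 + (v 1)^2 := by
  rw [EuclideanSpace.norm_eq]
  rw [Real.sq_sqrt (by positivity)]
  simp [Fin.sum_univ_two, sq_abs]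

lemma norm_eq_iff (v : EuclideanSpace ℝ (Fin 2)) (r : ℝ) (hr : 0 ≤ r) :
    ‖v‖ = r ↔ (v 0)^2 + (v 1)^2 = r^2 := by
  rw [← norm_sq_eq]
  constructor
  · rintro rfl; rfl
  · intro h
    nlinarith [norm_nonneg v]

lemma sub_apply' (x m : EuclideanSpace ℝ (Fin 2)) (i : Fin 2) : (x - m) i = x i - m i := rfl

lemma core (a0 a1 b0 b1 r1 r2 w : ℝ)
    (hd2 : (b0-a0)^2 + (b1-a1)^2 ≠ 0)
    (hw2 : w^2 = 4*r1^2*((b0-a0)^2+(b1-a1)^2) - (r1^2-r2^2+((b0-a0)^2+(b1-a1)^2))^2)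
    (x0 x1 : ℝ) :
    ((x0-a0)^2+(x1-a1)^2 = r1^2 ∧ (x0-b0)^2+(x1-b1)^2 = r2^2) ↔
      ((x0 = a0 + ((r1^2-r2^2+((b0-a0)^2+(b1-a1)^2))*(b0-a0) - w*(b1-a1))/(2*((b0-a0)^2+(b1-a1)^2)) ∧
        x1 = a1 + ((r1^2-r2^2+((b0-a0)^2+(b1-a1)^2))*(b1-a1) + w*(b0-a0))/(2*((b0-a0)^2+(b1-a1)^2))) ∨
       (x0 = a0 + ((r1^2-r2^2+((b0-a0)^2+(b1-a1)^2))*(b0-a0) + w*(b1-a1))/(2*((b0-a0)^2+(b1-a1)^2)) ∧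
        x1 = a1 + ((r1^2-r2^2+((b0-a0)^2+(b1-a1)^2))*(b1-a1) - w*(b0-a0))/(2*((b0-a0)^2+(b1-a1)^2)))) := by
  constructor
  · rintro ⟨h1, h2⟩
    have hlin : 2*((x0-a0)*(b0-a0) + (x1-a1)*(b1-a1)) = (r1^2-r2^2+((b0-a0)^2+(b1-a1)^2)) := by
      nlinarith [h1, h2]
    have hg : ((x1-a1)*(b0-a0) - (x0-a0)*(b1-a1))^2 = (w/2)^2 := by
      have key : ((x0-a0)*(b0-a0) + (x1-a1)*(b1-a1))^2 + ((x1-a1)*(b0-a0) - (x0-a0)*(b1-a1))^2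
          = ((x0-a0)^2+(x1-a1)^2) * ((b0-a0)^2+(b1-a1)^2) := by ring
      linear_combination key + ((b0-a0)^2+(b1-a1)^2)*h1 - hw2/4 -
        (((x0-a0)*(b0-a0) + (x1-a1)*(b1-a1))/2 + (r1^2-r2^2+((b0-a0)^2+(b1-a1)^2))/4) * hlin
    rcases mul_eq_zero.mp (show (((x1-a1)*(b0-a0) - (x0-a0)*(b1-a1)) - w/2) *
        (((x1-a1)*(b0-a0) - (x0-a0)*(b1-a1)) + w/2) = 0 by linear_combination hg) with hc | hc
    · left
      constructor
      · field_simp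
        linear_combination (b0-a0)*hlin - 2*(b1-a1)*hc
      · field_simp
        linear_combination (b1-a1)*hlin + 2*(b0-a0)*hc
    · right
      constructor
      · field_simp
        linear_combination (b0-a0)*hlin - 2*(b1-a1)*hc
      · field_simp
        linear_combination (b1-a1)*hlin + 2*(b0-a0)*hc
  · rintro (⟨hx0, hx1⟩ | ⟨hx0, hx1⟩) <;> subst hx0 hx1 <;> constructor <;>
      field_simp <;> linear_combination ((b0-a0)^2+(b1-a1)^2)*hw2

lemma fiber_lemma (m₁ m₂ : EuclideanSpace ℝ (Fin 2)) (hm : m₁ ≠ m₂) (r1 r2 : ℝ)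
    (h1 : r1 - r2 ≤ ‖m₂ - m₁‖) (h2 : r2 - r1 ≤ ‖m₂ - m₁‖) (h3 : ‖m₂ - m₁‖ ≤ r1 + r2) :
    ∃ P Q : EuclideanSpace ℝ (Fin 2),
      {x : EuclideanSpace ℝ (Fin 2) | ‖x - m₁‖ = r1 ∧ ‖x - m₂‖ = r2} = {P, Q} ∧
      (P = Q ↔ (r1 - r2 = ‖m₂ - m₁‖ ∨ r2 - r1 = ‖m₂ - m₁‖ ∨ ‖m₂ - m₁‖ = r1 + r2)) := by
  have hd : (0:ℝ) < ‖m₂ - m₁‖ := norm_pos_iff.mpr (sub_ne_zero.mpr (Ne.symm hm))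
  have hr1 : 0 ≤ r1 := by linarith
  have hr2 : 0 ≤ r2 := by linarith
  have hd2eq : ‖m₂ - m₁‖^2 = ((m₂ 0)-(m₁ 0))^2+((m₂ 1)-(m₁ 1))^2 := by
    rw [norm_sq_eq, sub_apply', sub_apply']
  have hD2ne : (((m₂ 0)-(m₁ 0))^2+((m₂ 1)-(m₁ 1))^2) ≠ 0 := by
    rw [← hd2eq]; positivity
  have hDfac : 4*r1^2*(((m₂ 0)-(m₁ 0))^2+((m₂ 1)-(m₁ 1))^2) - (r1^2-r2^2+(((m₂ 0)-(m₁ 0))^2+((m₂ 1)-(m₁ 1))^2))^2 = (‖m₂ - m₁‖+r2-r1)*(r1+r2-‖m₂ - m₁‖)*(‖m₂ - m₁‖+r1-r2)*(‖m₂ - m₁‖+r1+r2) := by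
    rw [← hd2eq]; ring
  have hDnn : 0 ≤ 4*r1^2*(((m₂ 0)-(m₁ 0))^2+((m₂ 1)-(m₁ 1))^2) - (r1^2-r2^2+(((m₂ 0)-(m₁ 0))^2+((m₂ 1)-(m₁ 1))^2))^2 := by
    rw [hDfac]
    have e1 : 0 ≤ ‖m₂ - m₁‖+r2-r1 := by linarith
    have e2 : 0 ≤ r1+r2-‖m₂ - m₁‖ := by linarith
    have e3 : 0 ≤ ‖m₂ - m₁‖+r1-r2 := by linarith
    have e4 : 0 ≤ ‖m₂ - m₁‖+r1+r2 := by linarith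
    exact mul_nonneg (mul_nonneg (mul_nonneg e1 e2) e3) e4
  set w := Real.sqrt (4*r1^2*(((m₂ 0)-(m₁ 0))^2+((m₂ 1)-(m₁ 1))^2) - (r1^2-r2^2+(((m₂ 0)-(m₁ 0))^2+((m₂ 1)-(m₁ 1))^2))^2) with hw_def
  have hw2 : w^2 = 4*r1^2*(((m₂ 0)-(m₁ 0))^2+((m₂ 1)-(m₁ 1))^2) - (r1^2-r2^2+(((m₂ 0)-(m₁ 0))^2+((m₂ 1)-(m₁ 1))^2))^2 := Real.sq_sqrt hDnn
  refine ⟨pt ((m₁ 0) + ((r1^2-r2^2+(((m₂ 0)-(m₁ 0))^2+((m₂ 1)-(m₁ 1))^2))*((m₂ 0)-(m₁ 0)) - w*((m₂ 1)-(m₁ 1)))/(2*(((m₂ 0)-(m₁ 0))^2+((m₂ 1)-(m₁ 1))^2))) ((m₁ 1) + ((r1^2-r2^2+(((m₂ 0)-(m₁ 0))^2+((m₂ 1)-(m₁ 1))^2))*((m₂ 1)-(m₁ 1)) + w*((m₂ 0)-(m₁ 0)))/(2*(((m₂ 0)-(m₁ 0))^2+((m₂ 1)-(m₁ 1))^2))),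 pt ((m₁ 0) + ((r1^2-r2^2+(((m₂ 0)-(m₁ 0))^2+((m₂ 1)-(m₁ 1))^2))*((m₂ 0)-(m₁ 0)) + w*((m₂ 1)-(m₁ 1)))/(2*(((m₂ 0)-(m₁ 0))^2+((m₂ 1)-(m₁ 1))^2))) ((m₁ 1) + ((r1^2-r2^2+(((m₂ 0)-(m₁ 0))^2+((m₂ 1)-(m₁ 1))^2))*((m₂ 1)-(m₁ 1)) - w*((m₂ 0)-(m₁ 0)))/(2*(((m₂ 0)-(m₁ 0))^2+((m₂ 1)-(m₁ 1))^2))), ?_, ?_⟩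
  · ext x
    simp only [Set.mem_setOf_eq, Set.mem_insert_iff, Set.mem_singleton_iff]
    rw [norm_eq_iff _ _ hr1, norm_eq_iff _ _ hr2, eq_pt_iff, eq_pt_iff]
    simp only [sub_apply']
    exact core (m₁ 0) (m₁ 1) (m₂ 0) (m₂ 1) r1 r2 w hD2ne hw2 (x 0) (x 1)
  · constructor
    · intro hPQ
      obtain ⟨h0', h1'⟩ := (eq_pt_iff _ _ _).mp hPQ
      rw [pt0] at h0'
      rw [pt1] at h1'
      have hU1 : w*((m₂ 1)-(m₁ 1)) = 0 := by
        have h2D2 : (2:ℝ)*(((m₂ 0)-(m₁ 0))^2+((m₂ 1)-(m₁ 1))^2) ≠ 0 := by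
          intro h; exact hD2ne (by linarith)
        field_simp at h0'
        linarith
      have hU0 : w*((m₂ 0)-(m₁ 0)) = 0 := by
        have h2D2 : (2:ℝ)*(((m₂ 0)-(m₁ 0))^2+((m₂ 1)-(m₁ 1))^2) ≠ 0 := by
          intro h; exact hD2ne (by linarith)
        field_simp at h1'
        linarith
      by_cases hw0 : w = 0
      · have hD0 : 4*r1^2*(((m₂ 0)-(m₁ 0))^2+((m₂ 1)-(m₁ 1))^2) - (r1^2-r2^2+(((m₂ 0)-(m₁ 0))^2+((m₂ 1)-(m₁ 1))^2))^2 = 0 := by rw [← hw2, hw0]; norm_num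
        rw [hDfac] at hD0
        have e4 : ‖m₂ - m₁‖+r1+r2 ≠ 0 := by positivity
        rcases mul_eq_zero.mp hD0 with hc | hc
        · rcases mul_eq_zero.mp hc with hc2 | hc2
          · rcases mul_eq_zero.mp hc2 with hc3 | hc3
            · left; linarith
            · right; right; linarith
          · right; left; linarith
        · exact absurd hc e4
      · exfalso
        have hu1 : ((m₂ 1)-(m₁ 1)) = 0 := (mul_eq_zero.mp hU1).resolve_left hw0
        have hu0 : ((m₂ 0)-(m₁ 0)) = 0 := (mul_eq_zero.mp hU0).resolve_left hw0
        apply hD2ne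
        rw [hu0, hu1]; ring
    · intro h
      have hD0 : 4*r1^2*(((m₂ 0)-(m₁ 0))^2+((m₂ 1)-(m₁ 1))^2) - (r1^2-r2^2+(((m₂ 0)-(m₁ 0))^2+((m₂ 1)-(m₁ 1))^2))^2 = 0 := by
        rw [hDfac]
        rcases h with h | h | h
        · rw [show ‖m₂ - m₁‖+r2-r1 = 0 by linarith]; ring
        · rw [show ‖m₂ - m₁‖+r1-r2 = 0 by linarith]; ring
        · rw [show r1+r2-‖m₂ - m₁‖ = 0 by linarith]; ring
      have hw0 : w = 0 := by rw [hw_def, hD0, Real.sqrt_zero]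
      rw [eq_pt_iff, pt0, pt1]
      constructor
      · rw [hw0]; ring
      · rw [hw0]; ring

/-- The image of the range map 𝒯₂ equals Q₂; the fiber over a point of Q₂
has exactly two elements if the point is in the interior of Q₂ and exactly one element
if it is in the boundary of Q₂. -/
theorem stmt0 (m₁ m₂ : EuclideanSpace ℝ (Fin 2)) (hm : m₁ ≠ m₂)
    (T2 : EuclideanSpace ℝ (Fin 2) → ℝ × ℝ)
    (hT2 : ∀ x, T2 x = (‖x - m₁‖, ‖x - m₂‖))
    (Q2 : Set (ℝ × ℝ))
    (hQ2 : Q2 = {p : ℝ × ℝ | p.1 - p.2 ≤ ‖m₂ - m₁‖ ∧ p.2 - p.1 ≤ ‖m₂ - m₁‖ ∧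
      ‖m₂ - m₁‖ ≤ p.1 + p.2}) :
    Set.range T2 = Q2 ∧
    ∀ p ∈ Q2,
      (p ∈ interior Q2 → (T2 ⁻¹' {p}).ncard = 2) ∧
      (p ∈ frontier Q2 → (T2 ⁻¹' {p}).ncard = 1) := by
  subst hQ2
  have hd : (0:ℝ) < ‖m₂ - m₁‖ := norm_pos_iff.mpr (sub_ne_zero.mpr (Ne.symm hm))
  -- closedness
  have hclosed : IsClosed {p : ℝ × ℝ | p.1 - p.2 ≤ ‖m₂ - m₁‖ ∧ p.2 - p.1 ≤ ‖m₂ - m₁‖ ∧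
      ‖m₂ - m₁‖ ≤ p.1 + p.2} := by
    have hA : IsClosed {p : ℝ × ℝ | p.1 - p.2 ≤ ‖m₂ - m₁‖} :=
      isClosed_le (continuous_fst.sub continuous_snd) continuous_const
    have hB : IsClosed {p : ℝ × ℝ | p.2 - p.1 ≤ ‖m₂ - m₁‖} :=
      isClosed_le (continuous_snd.sub continuous_fst) continuous_const
    have hC : IsClosed {p : ℝ × ℝ | ‖m₂ - m₁‖ ≤ p.1 + p.2} :=
      isClosed_le continuous_const (continuous_fst.add continuous_snd)
    exact hA.inter (hB.inter hC)
  -- interior characterization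
  have hIntChar : ∀ r1 r2 : ℝ, ((r1, r2) : ℝ × ℝ) ∈ interior {p : ℝ × ℝ | p.1 - p.2 ≤ ‖m₂ - m₁‖ ∧
      p.2 - p.1 ≤ ‖m₂ - m₁‖ ∧ ‖m₂ - m₁‖ ≤ p.1 + p.2} ↔
      (r1 - r2 < ‖m₂ - m₁‖ ∧ r2 - r1 < ‖m₂ - m₁‖ ∧ ‖m₂ - m₁‖ < r1 + r2) := by
    intro r1 r2
    constructor
    · intro h
      rw [mem_interior_iff_mem_nhds, Metric.mem_nhds_iff] at h
      obtain ⟨ε, hε, hball⟩ := h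
      have hq1 : ((r1 + ε/2, r2) : ℝ × ℝ) ∈ Metric.ball ((r1, r2) : ℝ × ℝ) ε := by
        rw [Metric.mem_ball, Prod.dist_eq]
        have e1 : dist (r1 + ε/2) r1 = ε/2 := by
          rw [Real.dist_eq, show r1 + ε/2 - r1 = ε/2 by ring, abs_of_nonneg (by linarith)]
        have e2 : dist r2 r2 = 0 := dist_self r2
        rw [e1, e2]
        simp only [max_eq_left (by linarith : (0:ℝ) ≤ ε/2)]
        linarith
      have hq2 : ((r1 - ε/2, r2) : ℝ × ℝ) ∈ Metric.ball ((r1, r2) : ℝ × ℝ) ε := by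
        rw [Metric.mem_ball, Prod.dist_eq]
        have e1 : dist (r1 - ε/2) r1 = ε/2 := by
          rw [Real.dist_eq, show r1 - ε/2 - r1 = -(ε/2) by ring, abs_neg,
            abs_of_nonneg (by linarith)]
        have e2 : dist r2 r2 = 0 := dist_self r2
        rw [e1, e2]
        simp only [max_eq_left (by linarith : (0:ℝ) ≤ ε/2)]
        linarith
      have hm1 := hball hq1
      have hm2 := hball hq2
      simp only [Set.mem_setOf_eq] at hm1 hm2
      refine ⟨by linarith [hm1.1], by linarith [hm2.2.1], by linarith [hm2.2.2]⟩
    · rintro ⟨hA, hB, hC⟩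
      have hopen : IsOpen {p : ℝ × ℝ | p.1 - p.2 < ‖m₂ - m₁‖ ∧ p.2 - p.1 < ‖m₂ - m₁‖ ∧
          ‖m₂ - m₁‖ < p.1 + p.2} := by
        have hA' : IsOpen {p : ℝ × ℝ | p.1 - p.2 < ‖m₂ - m₁‖} :=
          isOpen_lt (continuous_fst.sub continuous_snd) continuous_const
        have hB' : IsOpen {p : ℝ × ℝ | p.2 - p.1 < ‖m₂ - m₁‖} :=
          isOpen_lt (continuous_snd.sub continuous_fst) continuous_const
        have hC' : IsOpen {p : ℝ × ℝ | ‖m₂ - m₁‖ < p.1 + p.2} :=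
          isOpen_lt continuous_const (continuous_fst.add continuous_snd)
        exact hA'.inter (hB'.inter hC')
      have hsub : {p : ℝ × ℝ | p.1 - p.2 < ‖m₂ - m₁‖ ∧ p.2 - p.1 < ‖m₂ - m₁‖ ∧
          ‖m₂ - m₁‖ < p.1 + p.2} ⊆ {p : ℝ × ℝ | p.1 - p.2 ≤ ‖m₂ - m₁‖ ∧
          p.2 - p.1 ≤ ‖m₂ - m₁‖ ∧ ‖m₂ - m₁‖ ≤ p.1 + p.2} := by
        rintro q ⟨hq1, hq2, hq3⟩
        exact ⟨hq1.le, hq2.le, hq3.le⟩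
      exact interior_maximal hsub hopen ⟨hA, hB, hC⟩
  constructor
  · ext p
    constructor
    · rintro ⟨x, rfl⟩
      rw [hT2]
      have e1 : (x - m₁) - (x - m₂) = m₂ - m₁ := by abel
      have e2 : (x - m₂) - (x - m₁) = m₁ - m₂ := by abel
      refine ⟨?_, ?_, ?_⟩
      · have := norm_sub_norm_le (x - m₁) (x - m₂)
        rw [e1] at this
        simpa using this
      · have := norm_sub_norm_le (x - m₂) (x - m₁)
        rw [e2, norm_sub_rev m₁ m₂] at this
        exact this
      · have := norm_sub_le (x - m₁) (x - m₂)
        rw [e1] at this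
        simpa using this
    · rintro ⟨hp1, hp2, hp3⟩
      obtain ⟨P, Q, hfib, _⟩ := fiber_lemma m₁ m₂ hm p.1 p.2 hp1 hp2 hp3
      have hP : P ∈ {x : EuclideanSpace ℝ (Fin 2) | ‖x - m₁‖ = p.1 ∧ ‖x - m₂‖ = p.2} := by
        rw [hfib]; left; rfl
      exact ⟨P, by rw [hT2]; exact Prod.ext hP.1 hP.2⟩
  · rintro ⟨r1, r2⟩ hp
    simp only [Set.mem_setOf_eq] at hp
    obtain ⟨h1, h2, h3⟩ := hp
    obtain ⟨P, Q, hfib, hiff⟩ := fiber_lemma m₁ m₂ hm r1 r2 h1 h2 h3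
    have hfib' : T2 ⁻¹' {((r1, r2) : ℝ × ℝ)} = {P, Q} := by
      rw [← hfib]
      ext x
      simp [hT2, Prod.ext_iff]
    constructor
    · intro hint
      rw [hIntChar] at hint
      obtain ⟨hA, hB, hC⟩ := hint
      have hne : P ≠ Q := by
        intro h
        rcases hiff.mp h with h | h | h <;> linarith
      rw [hfib', Set.ncard_pair hne]
    · intro hfr
      rw [IsClosed.frontier_eq hclosed] at hfr
      have hnint := hfr.2
      have heq : r1 - r2 = ‖m₂ - m₁‖ ∨ r2 - r1 = ‖m₂ - m₁‖ ∨ ‖m₂ - m₁‖ = r1 + r2 := by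
        by_contra hc
        push_neg at hc
        exact hnint ((hIntChar r1 r2).mpr
          ⟨lt_of_le_of_ne h1 hc.1, lt_of_le_of_ne h2 hc.2.1, lt_of_le_of_ne h3 hc.2.2⟩)
      have hPQ := hiff.mpr heq
      rw [hfib', hPQ, Set.pair_eq_singleton, Set.ncard_singleton]
end

section
/- Let (𝒯₁,𝒯₂) ∈ Q₂ and set a = (d₂₁² + 𝒯₁² − 𝒯₂²)/(2 d₂₁). Then 𝒯₁² − a² ≥ 0, and the fiber 𝒯₂⁻¹(𝒯₁,𝒯₂) equals exactly the set {x₊, x₋}, where x_± = m₁ + a·(m₂−m₁)/d₂₁ ± √(𝒯₁² − a²)·R((m₂−m₁)/d₂₁) and R : ℝ² → ℝ² denotes rotation of the plane by +π/2 (i.e. R(u,v) = (−v,u)). -/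
private lemma norm_eq_iff_aux (v : EuclideanSpace ℝ (Fin 2)) (t : ℝ) (ht : 0 ≤ t) :
    ‖v‖ = t ↔ (v 0)^2 + (v 1)^2 = t^2 := by
  have h : ‖v‖^2 = (v 0)^2 + (v 1)^2 := by
    rw [EuclideanSpace.norm_eq, Fin.sum_univ_two, Real.sq_sqrt (by positivity)]
    simp [sq_abs]
  constructor
  · rintro rfl; rw [h]
  · intro hh
    exact (pow_left_inj₀ (norm_nonneg v) ht (show (2:ℕ) ≠ 0 by norm_num)).mp (by rw [h, hh])

private lemma vec_eq_iff (x v : EuclideanSpace ℝ (Fin 2)) :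
    x = v ↔ x 0 = v 0 ∧ x 1 = v 1 := by
  constructor
  · rintro rfl; exact ⟨rfl, rfl⟩
  · rintro ⟨h0, h1⟩; ext i; fin_cases i <;> assumption

set_option maxHeartbeats 1000000 in
/-- explicit description of the fiber of 𝒯₂ over a point of Q₂. -/
theorem stmt1 (m₁ m₂ : EuclideanSpace ℝ (Fin 2)) (hm : m₁ ≠ m₂)
    (T₁ T₂ : ℝ)
    (hQ1 : T₁ - T₂ ≤ ‖m₂ - m₁‖) (hQ2 : T₂ - T₁ ≤ ‖m₂ - m₁‖) (hQ3 : ‖m₂ - m₁‖ ≤ T₁ + T₂)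
    (a : ℝ) (ha : a = (‖m₂ - m₁‖ ^ 2 + T₁ ^ 2 - T₂ ^ 2) / (2 * ‖m₂ - m₁‖))
    (R : EuclideanSpace ℝ (Fin 2) → EuclideanSpace ℝ (Fin 2))
    (hR : ∀ p, R p = (WithLp.equiv 2 (Fin 2 → ℝ)).symm ![-(p 1), p 0]) :
    0 ≤ T₁ ^ 2 - a ^ 2 ∧
    {x : EuclideanSpace ℝ (Fin 2) | ‖x - m₁‖ = T₁ ∧ ‖x - m₂‖ = T₂} =
      {m₁ + (a / ‖m₂ - m₁‖) • (m₂ - m₁) +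
          Real.sqrt (T₁ ^ 2 - a ^ 2) • R ((‖m₂ - m₁‖)⁻¹ • (m₂ - m₁)),
       m₁ + (a / ‖m₂ - m₁‖) • (m₂ - m₁) -
          Real.sqrt (T₁ ^ 2 - a ^ 2) • R ((‖m₂ - m₁‖)⁻¹ • (m₂ - m₁))} := by
  set d : ℝ := ‖m₂ - m₁‖ with hd
  have hd0 : 0 < d := norm_sub_pos_iff.mpr (Ne.symm hm)
  have hdsq : (d:ℝ)^2 ≠ 0 := by positivity
  have hT1 : 0 ≤ T₁ := by linarith
  have hT2 : 0 ≤ T₂ := by linarith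
  set A := m₁ 0 with hA
  set B := m₁ 1 with hB
  set C := m₂ 0 with hC
  set D := m₂ 1 with hD
  have hd2 : d^2 = (C - A)^2 + (D - B)^2 := by
    have := (norm_eq_iff_aux (m₂ - m₁) d hd0.le).mp rfl
    simpa [PiLp.sub_apply] using this.symm
  have key : (T₁^2 - a^2) * (2*d)^2
      = ((d + T₂ - T₁) * (d + T₁ - T₂)) * ((T₁ + T₂ - d) * (T₁ + T₂ + d)) := by
    rw [ha]; field_simp; ring
  have part1 : 0 ≤ T₁ ^ 2 - a ^ 2 := by
    have h4 : (0:ℝ) < (2*d)^2 := by positivity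
    nlinarith [mul_nonneg (mul_nonneg (by linarith : (0:ℝ) ≤ d + T₂ - T₁)
      (by linarith : (0:ℝ) ≤ d + T₁ - T₂))
      (mul_nonneg (by linarith : (0:ℝ) ≤ T₁ + T₂ - d) (by linarith : (0:ℝ) ≤ T₁ + T₂ + d))]
  refine ⟨part1, ?_⟩
  set s : ℝ := Real.sqrt (T₁ ^ 2 - a ^ 2) with hs
  have hs0 : 0 ≤ s := Real.sqrt_nonneg _
  have hs2 : s^2 = T₁^2 - a^2 := Real.sq_sqrt part1
  have hda : 2 * (d * a) = d^2 + T₁^2 - T₂^2 := by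
    rw [ha]; field_simp
  have hR0 : (R ((d:ℝ)⁻¹ • (m₂ - m₁))) 0 = -(d⁻¹ * (D - B)) := by
    rw [hR]; simp [hA, hB, hC, hD, PiLp.smul_apply, PiLp.sub_apply]
  have hR1 : (R ((d:ℝ)⁻¹ • (m₂ - m₁))) 1 = d⁻¹ * (C - A) := by
    rw [hR]; simp [hA, hB, hC, hD, PiLp.smul_apply, PiLp.sub_apply]
  ext x
  simp only [Set.mem_setOf_eq, Set.mem_insert_iff, Set.mem_singleton_iff]
  rw [norm_eq_iff_aux _ _ hT1, norm_eq_iff_aux _ _ hT2, vec_eq_iff, vec_eq_iff]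
  simp only [PiLp.add_apply, PiLp.sub_apply, PiLp.smul_apply, smul_eq_mul, hR0, hR1,
    ← hA, ← hB, ← hC, ← hD]
  constructor
  · rintro ⟨h1, h2⟩
    set y0 := x 0 - A with hy0
    set y1 := x 1 - B with hy1
    have hx0 : x 0 = A + y0 := by rw [hy0]; ring
    have hx1 : x 1 = B + y1 := by rw [hy1]; ring
    rw [hx0, hx1] at h2
    have hlin : (C - A) * y0 + (D - B) * y1 = d * a := by
      linear_combination (h1 - h2 - hd2 - hda) / 2
    set β : ℝ := ((C - A) * y1 - (D - B) * y0) / d with hβ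
    have hdβ : d * β = (C - A) * y1 - (D - B) * y0 := by
      rw [hβ]; field_simp
    have hdsq : (d:ℝ)^2 ≠ 0 := by positivity
    have hβ2 : β^2 = s^2 := by
      refine mul_left_cancel₀ hdsq ?_
      linear_combination (d*β + ((C - A)*y1 - (D - B)*y0)) * hdβ + d^2 * h1
        - (y0^2 + y1^2) * hd2 - (((C - A)*y0 + (D - B)*y1) + d*a) * hlin - d^2 * hs2
    have hy0' : y0 * d = a * (C - A) - β * (D - B) := by
      refine mul_left_cancel₀ hd0.ne' ?_
      linear_combination (C - A) * hlin + (D - B) * hdβ + y0 * hd2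
    have hy1' : y1 * d = a * (D - B) + β * (C - A) := by
      refine mul_left_cancel₀ hd0.ne' ?_
      linear_combination (D - B) * hlin - (C - A) * hdβ + y1 * hd2
    have hcases : β = s ∨ β = -s := by
      have h5 : (β - s) * (β + s) = 0 := by linear_combination hβ2
      rcases mul_eq_zero.mp h5 with h | h
      · left; linarith
      · right; linarith
    rcases hcases with h | h
    · left
      rw [h] at hy0' hy1'
      constructor
      · rw [hx0]; field_simp; linear_combination hy0'
      · rw [hx1]; field_simp; linear_combination hy1'
    · right
      rw [h] at hy0' hy1'
      constructor
      · rw [hx0]; field_simp; linear_combination hy0'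
      · rw [hx1]; field_simp; linear_combination hy1'
  · have e0p : A + a / d * (C - A) + s * -(d⁻¹ * (D - B)) - A
        = (a * (C - A) - s * (D - B)) / d := by field_simp; ring
    have e1p : B + a / d * (D - B) + s * (d⁻¹ * (C - A)) - B
        = (a * (D - B) + s * (C - A)) / d := by field_simp; ring
    have e0m : A + a / d * (C - A) - s * -(d⁻¹ * (D - B)) - A
        = (a * (C - A) + s * (D - B)) / d := by field_simp; ring
    have e1m : B + a / d * (D - B) - s * (d⁻¹ * (C - A)) - B
        = (a * (D - B) - s * (C - A)) / d := by field_simp; ring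
    have e0pC : A + a / d * (C - A) + s * -(d⁻¹ * (D - B)) - C
        = (a * (C - A) - s * (D - B) - d * (C - A)) / d := by field_simp; ring
    have e1pD : B + a / d * (D - B) + s * (d⁻¹ * (C - A)) - D
        = (a * (D - B) + s * (C - A) - d * (D - B)) / d := by field_simp; ring
    have e0mC : A + a / d * (C - A) - s * -(d⁻¹ * (D - B)) - C
        = (a * (C - A) + s * (D - B) - d * (C - A)) / d := by field_simp; ring
    have e1mD : B + a / d * (D - B) - s * (d⁻¹ * (C - A)) - D
        = (a * (D - B) - s * (C - A) - d * (D - B)) / d := by field_simp; ring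
    rintro (⟨h0, h1⟩ | ⟨h0, h1⟩) <;> rw [h0, h1] <;> constructor
    · rw [e0p, e1p, div_pow, div_pow, ← add_div, div_eq_iff hdsq]
      linear_combination (-(a^2 + s^2)) * hd2 + d^2 * hs2
    · rw [e0pC, e1pD, div_pow, div_pow, ← add_div, div_eq_iff hdsq]
      linear_combination (-T₂^2) * hd2 + ((C - A)^2 + (D - B)^2) * hs2
        - ((C - A)^2 + (D - B)^2) * hda
    · rw [e0m, e1m, div_pow, div_pow, ← add_div, div_eq_iff hdsq]
      linear_combination (-(a^2 + s^2)) * hd2 + d^2 * hs2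
    · rw [e0mC, e1mD, div_pow, div_pow, ← add_div, div_eq_iff hdsq]
      linear_combination (-T₂^2) * hd2 + ((C - A)^2 + (D - B)^2) * hs2
        - ((C - A)^2 + (D - B)^2) * hda
end

section
/- The map 𝒯₃ is differentiable on D = ℝ² ∖ {m₁,m₂,m₃}, and its Jacobian matrix J(x) at x ∈ D is the 3×2 matrix whose i-th row is the unit vector (x − m_i)/d_i(x). Then: (i) if m₁, m₂, m₃ are not collinear, rank J(x) = 2 for every x ∈ D; (ii) if m₁, m₂, m₃ lie on a line r, then rank J(x) = 1 for x ∈ r ∩ D and rank J(x) = 2 for x ∈ D ∖ r. -/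
open Module Submodule

/-- Derivative of the norm on Euclidean plane away from 0. -/
lemma hasFDerivAt_norm_euclid (y : EuclideanSpace ℝ (Fin 2)) (hy : y ≠ 0) :
    HasFDerivAt (fun z : EuclideanSpace ℝ (Fin 2) => ‖z‖) (‖y‖⁻¹ • innerSL ℝ y) y := by
  have hne : ‖y‖ ≠ 0 := norm_ne_zero_iff.2 hy
  have h2 : HasFDerivAt (fun z : EuclideanSpace ℝ (Fin 2) => ‖z‖ ^ 2)
      (2 • innerSL ℝ y) y := (hasStrictFDerivAt_norm_sq y).hasFDerivAt
  have h := h2.sqrt (pow_ne_zero 2 hne)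
  have heq : (fun z : EuclideanSpace ℝ (Fin 2) => Real.sqrt (‖z‖ ^ 2)) = fun z => ‖z‖ :=
    funext fun z => Real.sqrt_sq (norm_nonneg z)
  rw [heq] at h
  refine h.congr_fderiv ?_
  rw [Real.sqrt_sq (norm_nonneg y)]
  ext z
  simp only [ContinuousLinearMap.coe_smul', Pi.smul_apply, smul_eq_mul,
    ContinuousLinearMap.smul_apply]
  field_simp
  ring

/-- rank of a matrix equals the dimension of the span of its rows. -/
lemma rank_eq_rows (A : Matrix (Fin 3) (Fin 2) ℝ) :
    A.rank = finrank ℝ (span ℝ (Set.range A)) := by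
  rw [← Matrix.rank_transpose, Matrix.rank_eq_finrank_span_cols]
  rfl

lemma rank_eq_two_of_pair (A : Matrix (Fin 3) (Fin 2) ℝ) (i j : Fin 3)
    (h : LinearIndependent ℝ ![A i, A j]) : A.rank = 2 := by
  rw [rank_eq_rows]
  have hcard : Fintype.card (Fin 2) = finrank ℝ (Fin 2 → ℝ) := by
    simp [Module.finrank_fin_fun]
  have htop : span ℝ (Set.range ![A i, A j]) = ⊤ :=
    h.span_eq_top_of_card_eq_finrank hcard
  have hsub : Set.range ![A i, A j] ⊆ Set.range A := by
    rw [Set.range_subset_iff]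
    intro k
    fin_cases k
    · exact ⟨i, rfl⟩
    · exact ⟨j, rfl⟩
  have : span ℝ (Set.range A) = ⊤ :=
    le_antisymm le_top (htop ▸ span_mono hsub)
  rw [this, finrank_top, Module.finrank_fin_fun]

lemma rank_eq_one_of_rows (A : Matrix (Fin 3) (Fin 2) ℝ) (v : Fin 2 → ℝ)
    (h0 : A 0 ≠ 0) (h : ∀ i, ∃ c : ℝ, A i = c • v) : A.rank = 1 := by
  have hv : v ≠ 0 := by
    rintro rfl
    obtain ⟨c, hc⟩ := h 0
    exact h0 (by simpa using hc)
  have hle : span ℝ (Set.range A) ≤ span ℝ {v} := by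
    rw [span_le]
    rintro _ ⟨i, rfl⟩
    obtain ⟨c, hc⟩ := h i
    exact mem_span_singleton.2 ⟨c, hc.symm⟩
  have h1 : finrank ℝ (span ℝ (Set.range A)) ≤ 1 := by
    calc finrank ℝ (span ℝ (Set.range A)) ≤ finrank ℝ (span ℝ ({v} : Set (Fin 2 → ℝ))) :=
      Submodule.finrank_mono hle
    _ = 1 := finrank_span_singleton hv
  have h2 : finrank ℝ (span ℝ (Set.range A)) ≠ 0 := by
    intro hz
    rw [Submodule.finrank_eq_zero] at hz
    have : A 0 ∈ span ℝ (Set.range A) := subset_span ⟨0, rfl⟩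
    rw [hz] at this
    exact h0 (by simpa using this)
  rw [rank_eq_rows]
  omega

/-- 𝒯₃ is differentiable on D = ℝ² ∖ {m₁,m₂,m₃} with Jacobian J(x) whose
i-th row is (x − mᵢ)/dᵢ(x); rank of J(x) is 2 everywhere on D if the receivers are not
collinear, while if they lie on a line r, the rank is 1 on r ∩ D and 2 elsewhere. -/
theorem stmt2 (m : Fin 3 → EuclideanSpace ℝ (Fin 2)) (hm : Function.Injective m)
    (J : EuclideanSpace ℝ (Fin 2) → Matrix (Fin 3) (Fin 2) ℝ)
    (hJ : ∀ x i l, J x i l = (x l - m i l) / ‖x - m i‖)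
    (T3 : EuclideanSpace ℝ (Fin 2) → EuclideanSpace ℝ (Fin 3))
    (hT3 : ∀ x i, T3 x i = ‖x - m i‖) :
    (∀ x : EuclideanSpace ℝ (Fin 2), (∀ i, x ≠ m i) →
      HasFDerivAt T3 (LinearMap.toContinuousLinearMap (Matrix.toEuclideanLin (J x))) x) ∧
    (¬ Collinear ℝ (Set.range m) →
      ∀ x : EuclideanSpace ℝ (Fin 2), (∀ i, x ≠ m i) → (J x).rank = 2) ∧
    (Collinear ℝ (Set.range m) →
      ∀ x : EuclideanSpace ℝ (Fin 2), (∀ i, x ≠ m i) →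
        ((Collinear ℝ (Set.range m ∪ {x}) → (J x).rank = 1) ∧
         (¬ Collinear ℝ (Set.range m ∪ {x}) → (J x).rank = 2))) := by
  -- basic facts
  have hsub0 : ∀ (x : EuclideanSpace ℝ (Fin 2)), (∀ i, x ≠ m i) →
      ∀ i, x - m i ≠ 0 := fun x hx i => sub_ne_zero.2 (hx i)
  have hdne : ∀ (x : EuclideanSpace ℝ (Fin 2)), (∀ i, x ≠ m i) →
      ∀ i, ‖x - m i‖ ≠ 0 := fun x hx i => norm_ne_zero_iff.2 (hsub0 x hx i)
  -- rows as scalar multiples of coordinate difference vectors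
  have hrow : ∀ (x : EuclideanSpace ℝ (Fin 2)) i,
      J x i = ‖x - m i‖⁻¹ • (fun l => x l - m i l) := by
    intro x i
    funext l
    simp [hJ, div_eq_inv_mul]
  have hrowne : ∀ (x : EuclideanSpace ℝ (Fin 2)), (∀ i, x ≠ m i) →
      ∀ i, J x i ≠ 0 := by
    intro x hx i h
    apply hx i
    ext l
    have := congrFun h l
    rw [hJ] at this
    have hd := hdne x hx i
    field_simp at this
    norm_num at this
    linarith
  -- key rank dichotomy
  have key : ∀ (x : EuclideanSpace ℝ (Fin 2)), (∀ i, x ≠ m i) →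
      (Collinear ℝ (Set.range m ∪ {x}) → (J x).rank = 1) ∧
      (¬ Collinear ℝ (Set.range m ∪ {x}) → (J x).rank = 2) := by
    intro x hx
    constructor
    · intro hc
      obtain ⟨v, hv⟩ := (collinear_iff_of_mem (Set.mem_union_right _ rfl :
        x ∈ Set.range m ∪ {x})).1 hc
      refine rank_eq_one_of_rows (J x) (fun l => v l) (hrowne x hx 0) ?_
      intro i
      obtain ⟨r, hr⟩ := hv (m i) (Set.mem_union_left _ ⟨i, rfl⟩)
      refine ⟨‖x - m i‖⁻¹ * (-r), ?_⟩
      rw [hrow x i]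
      funext l
      have := congrArg (fun p => p l) hr
      simp only [vadd_eq_add, PiLp.add_apply, PiLp.smul_apply, smul_eq_mul] at this
      simp only [Pi.smul_apply, smul_eq_mul]
      rw [this]
      ring
    · intro hnc
      -- some pair of difference vectors is independent
      set w : Fin 3 → (Fin 2 → ℝ) := fun i l => x l - m i l with hw
      have hwne : ∀ i, w i ≠ 0 := by
        intro i h
        apply hx i
        ext l
        have := congrFun h l
        simp only [hw, Pi.zero_apply] at this
        linarith
      have hindep : ∃ j, ∀ c : ℝ, c • w 0 ≠ w j := by
        by_contra h
        push_neg at h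
        apply hnc
        rw [collinear_iff_of_mem (Set.mem_union_right _ rfl :
          x ∈ Set.range m ∪ {x})]
        refine ⟨x - m 0, ?_⟩
        rintro p (⟨i, rfl⟩ | rfl)
        · obtain ⟨c, hc⟩ := h i
          refine ⟨-c, ?_⟩
          ext l
          have h1 := congrFun hc l
          simp only [hw, Pi.smul_apply, smul_eq_mul] at h1
          simp only [vadd_eq_add, PiLp.add_apply, PiLp.smul_apply, PiLp.sub_apply, smul_eq_mul]
          linarith
        · exact ⟨0, by simp⟩
      obtain ⟨j, hj⟩ := hindep
      refine rank_eq_two_of_pair (J x) 0 j ?_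
      rw [LinearIndependent.pair_iff' (hrowne x hx 0)]
      intro a ha
      apply hj (‖x - m j‖ * (a * ‖x - m 0‖⁻¹))
      have h0 : J x 0 = ‖x - m 0‖⁻¹ • w 0 := hrow x 0
      have h1 : J x j = ‖x - m j‖⁻¹ • w j := hrow x j
      rw [h0, h1] at ha
      have := congrArg (fun z => (‖x - m j‖ : ℝ) • z) ha
      simp only [smul_smul] at this
      rw [mul_inv_cancel₀ (hdne x hx j), one_smul] at this
      rw [← this]
  refine ⟨?_, ?_, ?_⟩
  · -- differentiability
    intro x hx
    have hcoord : ∀ i, HasFDerivAt (fun y : EuclideanSpace ℝ (Fin 2) => ‖y - m i‖)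
        (‖x - m i‖⁻¹ • innerSL ℝ (x - m i)) x := by
      intro i
      have hsubd : HasFDerivAt (fun y : EuclideanSpace ℝ (Fin 2) => y - m i)
          (ContinuousLinearMap.id ℝ _) x := (hasFDerivAt_id x).sub_const (m i)
      have := (hasFDerivAt_norm_euclid (x - m i) (hsub0 x hx i)).comp x hsubd
      exact this.congr_fderiv (ContinuousLinearMap.comp_id _)
    have hg : HasFDerivAt (fun (y : EuclideanSpace ℝ (Fin 2)) (i : Fin 3) => ‖y - m i‖)
        (ContinuousLinearMap.pi (fun i => ‖x - m i‖⁻¹ • innerSL ℝ (x - m i))) x :=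
      hasFDerivAt_pi.2 hcoord
    set e : EuclideanSpace ℝ (Fin 3) ≃L[ℝ] (Fin 3 → ℝ) :=
      PiLp.continuousLinearEquiv 2 ℝ (fun _ : Fin 3 => ℝ) with he
    have hT : HasFDerivAt T3
        ((e.symm : (Fin 3 → ℝ) →L[ℝ] EuclideanSpace ℝ (Fin 3)).comp
          (ContinuousLinearMap.pi (fun i => ‖x - m i‖⁻¹ • innerSL ℝ (x - m i)))) x := by
      have hfun : T3 = fun y => e.symm (fun i => ‖y - m i‖) := by
        funext y
        ext i
        exact hT3 y i
      rw [hfun]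
      exact (e.symm.toContinuousLinearMap.hasFDerivAt).comp x hg
    refine hT.congr_fderiv ?_
    symm
    refine ContinuousLinearMap.ext fun v => ?_
    ext i
    show (Matrix.toEuclideanLin (J x) v) i = _
    simp only [Matrix.toEuclideanLin_apply, ContinuousLinearMap.coe_comp', Function.comp_apply,
      ContinuousLinearEquiv.coe_coe, ContinuousLinearMap.pi_apply,
      ContinuousLinearMap.smul_apply, innerSL_apply_apply]
    show (Matrix.mulVec (J x) (fun l => v l)) i = _
    show (∑ l, J x i l * v l) = ‖x - m i‖⁻¹ • (inner ℝ (x - m i) v : ℝ)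
    rw [PiLp.inner_apply]
    simp only [RCLike.inner_apply, conj_trivial, smul_eq_mul, Finset.mul_sum, PiLp.sub_apply]
    refine Finset.sum_congr rfl fun l _ => ?_
    rw [hJ]
    ring
  · intro hnc x hx
    exact (key x hx).2 (fun h => hnc (h.subset Set.subset_union_left))
  · intro _ x hx
    exact key x hx
end

section
/- Assume m₁, m₂, m₃ are not collinear, set a = (d₃₂·d₃₁)/(d₃₂ d₃₁), b = (d₃₂·d₂₁)/(d₃₂ d₂₁), c = (d₃₁·d₂₁)/(d₃₁ d₂₁), and let F̄(t₀,t₁,t₂,t₃) = t₀⁴ + t₁⁴ + t₂⁴ + t₃⁴ − 2a(t₁²t₂² + t₀²t₃²) + 2b(t₁²t₃² + t₀²t₂²) − 2c(t₂²t₃² + t₀²t₁²). Then F̄ and all four partial derivatives ∂F̄/∂t_l vanish at each of the 16 points (0, ε₁√d₃₂, ε₂√d₃₁, ε₃√d₂₁), (ε₁√d₃₂, 0, ε₂√d₂₁, ε₃√d₃₁), (ε₁√d₃₁, ε₂√d₂₁, 0, ε₃√d₃₂) and (ε₁√d₂₁, ε₂√d₃₁, ε₃√d₃₂, 0), for every choice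 of signs ε₁, ε₂, ε₃ ∈ {+1,−1}; i.e. these 16 projective points are singular points of the projective quartic surface F̄ = 0 (which is thus a Kummer quartic). -/
lemma aux_fderiv (a b c : ℝ) (p : Fin 4 → ℝ)
    (h0 : p 0 * (p 0 ^ 2 - a * p 3 ^ 2 + b * p 2 ^ 2 - c * p 1 ^ 2) = 0)
    (h1 : p 1 * (p 1 ^ 2 - a * p 2 ^ 2 + b * p 3 ^ 2 - c * p 0 ^ 2) = 0)
    (h2 : p 2 * (p 2 ^ 2 - a * p 1 ^ 2 + b * p 0 ^ 2 - c * p 3 ^ 2) = 0)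
    (h3 : p 3 * (p 3 ^ 2 - a * p 0 ^ 2 + b * p 1 ^ 2 - c * p 2 ^ 2) = 0) :
    fderiv ℝ (fun t : Fin 4 → ℝ =>
      t 0 ^ 4 + t 1 ^ 4 + t 2 ^ 4 + t 3 ^ 4
      - 2 * a * (t 1 ^ 2 * t 2 ^ 2 + t 0 ^ 2 * t 3 ^ 2)
      + 2 * b * (t 1 ^ 2 * t 3 ^ 2 + t 0 ^ 2 * t 2 ^ 2)
      - 2 * c * (t 2 ^ 2 * t 3 ^ 2 + t 0 ^ 2 * t 1 ^ 2)) p = 0 := by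
  have hp : ∀ i : Fin 4, HasFDerivAt (fun t : Fin 4 → ℝ => t i)
      (ContinuousLinearMap.proj (R := ℝ) (φ := fun _ : Fin 4 => ℝ) i) p := fun i =>
    (hasStrictFDerivAt_apply (𝕜 := ℝ) (F' := fun _ : Fin 4 => ℝ) i p).hasFDerivAt
  have hsq := fun i => (hp i).mul (hp i)
  have H := (((((((hsq 0).mul (hsq 0)).add ((hsq 1).mul (hsq 1))).add
      ((hsq 2).mul (hsq 2))).add ((hsq 3).mul (hsq 3))).sub
      ((((hsq 1).mul (hsq 2)).add ((hsq 0).mul (hsq 3))).const_mul (2 * a))).add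
      ((((hsq 1).mul (hsq 3)).add ((hsq 0).mul (hsq 2))).const_mul (2 * b))).sub
      ((((hsq 2).mul (hsq 3)).add ((hsq 0).mul (hsq 1))).const_mul (2 * c))
  rw [show (fun t : Fin 4 → ℝ =>
      t 0 ^ 4 + t 1 ^ 4 + t 2 ^ 4 + t 3 ^ 4
      - 2 * a * (t 1 ^ 2 * t 2 ^ 2 + t 0 ^ 2 * t 3 ^ 2)
      + 2 * b * (t 1 ^ 2 * t 3 ^ 2 + t 0 ^ 2 * t 2 ^ 2)
      - 2 * c * (t 2 ^ 2 * t 3 ^ 2 + t 0 ^ 2 * t 1 ^ 2)) =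
    (fun t : Fin 4 → ℝ =>
      t 0 * t 0 * (t 0 * t 0) + t 1 * t 1 * (t 1 * t 1) + t 2 * t 2 * (t 2 * t 2)
        + t 3 * t 3 * (t 3 * t 3)
      - 2 * a * (t 1 * t 1 * (t 2 * t 2) + t 0 * t 0 * (t 3 * t 3))
      + 2 * b * (t 1 * t 1 * (t 3 * t 3) + t 0 * t 0 * (t 2 * t 2))
      - 2 * c * (t 2 * t 2 * (t 3 * t 3) + t 0 * t 0 * (t 1 * t 1)))
    from funext fun t => by ring]
  refine H.fderiv.trans ?_
  ext v
  simp only [ContinuousLinearMap.add_apply, ContinuousLinearMap.sub_apply,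
    ContinuousLinearMap.smul_apply, ContinuousLinearMap.proj_apply, smul_eq_mul,
    ContinuousLinearMap.zero_apply, ContinuousLinearMap.coe_smul', Pi.smul_apply, Pi.mul_apply]
  linear_combination (4 * v 0) * h0 + (4 * v 1) * h1 + (4 * v 2) * h2 + (4 * v 3) * h3

lemma auxE1 (u v w I J : ℝ) (hu : u ≠ 0) (hv : v ≠ 0) (hw : w ≠ 0)
    (h : I - J = u ^ 2) : u - I / (u * v) * v + J / (u * w) * w = 0 := by
  field_simp
  linear_combination -h

lemma auxE2 (u v w I J : ℝ) (hu : u ≠ 0) (hv : v ≠ 0) (hw : w ≠ 0)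
    (h : I + J = v ^ 2) : v - I / (u * v) * u - J / (v * w) * w = 0 := by
  field_simp
  linear_combination -h

lemma auxE3 (u v w I J : ℝ) (hu : u ≠ 0) (hv : v ≠ 0) (hw : w ≠ 0)
    (h : J - I = w ^ 2) : w + I / (u * w) * u - J / (v * w) * v = 0 := by
  field_simp
  linear_combination -h

/-- the homogeneous quartic F̄ and all its partial derivatives vanish at the
16 points listed, i.e. these are singular points of the projective quartic (a Kummer
quartic surface). -/
theorem stmt6 (m₁ m₂ m₃ : EuclideanSpace ℝ (Fin 2))
    (hd12 : m₁ ≠ m₂) (hd13 : m₁ ≠ m₃) (hd23 : m₂ ≠ m₃)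
    (hnc : ¬ Collinear ℝ ({m₁, m₂, m₃} : Set (EuclideanSpace ℝ (Fin 2))))
    (a b c : ℝ)
    (ha : a = (inner ℝ (m₃ - m₂) (m₃ - m₁) : ℝ) / (‖m₃ - m₂‖ * ‖m₃ - m₁‖))
    (hb : b = (inner ℝ (m₃ - m₂) (m₂ - m₁) : ℝ) / (‖m₃ - m₂‖ * ‖m₂ - m₁‖))
    (hc : c = (inner ℝ (m₃ - m₁) (m₂ - m₁) : ℝ) / (‖m₃ - m₁‖ * ‖m₂ - m₁‖))
    (G : (Fin 4 → ℝ) → ℝ)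
    (hG : ∀ t : Fin 4 → ℝ, G t =
      t 0 ^ 4 + t 1 ^ 4 + t 2 ^ 4 + t 3 ^ 4
      - 2 * a * (t 1 ^ 2 * t 2 ^ 2 + t 0 ^ 2 * t 3 ^ 2)
      + 2 * b * (t 1 ^ 2 * t 3 ^ 2 + t 0 ^ 2 * t 2 ^ 2)
      - 2 * c * (t 2 ^ 2 * t 3 ^ 2 + t 0 ^ 2 * t 1 ^ 2)) :
    ∀ ε₁ ε₂ ε₃ : ℝ, (ε₁ = 1 ∨ ε₁ = -1) → (ε₂ = 1 ∨ ε₂ = -1) → (ε₃ = 1 ∨ ε₃ = -1) →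
    ∀ p ∈ ({![0, ε₁ * Real.sqrt ‖m₃ - m₂‖, ε₂ * Real.sqrt ‖m₃ - m₁‖, ε₃ * Real.sqrt ‖m₂ - m₁‖],
            ![ε₁ * Real.sqrt ‖m₃ - m₂‖, 0, ε₂ * Real.sqrt ‖m₂ - m₁‖, ε₃ * Real.sqrt ‖m₃ - m₁‖],
            ![ε₁ * Real.sqrt ‖m₃ - m₁‖, ε₂ * Real.sqrt ‖m₂ - m₁‖, 0, ε₃ * Real.sqrt ‖m₃ - m₂‖],
            ![ε₁ * Real.sqrt ‖m₂ - m₁‖, ε₂ * Real.sqrt ‖m₃ - m₁‖, ε₃ * Real.sqrt ‖m₃ - m₂‖, 0]} :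
          Set (Fin 4 → ℝ)),
      G p = 0 ∧ fderiv ℝ G p = 0 := by
  have hGfun : G = fun t : Fin 4 → ℝ =>
      t 0 ^ 4 + t 1 ^ 4 + t 2 ^ 4 + t 3 ^ 4
      - 2 * a * (t 1 ^ 2 * t 2 ^ 2 + t 0 ^ 2 * t 3 ^ 2)
      + 2 * b * (t 1 ^ 2 * t 3 ^ 2 + t 0 ^ 2 * t 2 ^ 2)
      - 2 * c * (t 2 ^ 2 * t 3 ^ 2 + t 0 ^ 2 * t 1 ^ 2) := funext hG
  -- abbreviations
  have hu : ‖m₃ - m₂‖ ≠ 0 := norm_ne_zero_iff.mpr (sub_ne_zero.mpr hd23.symm)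
  have hv : ‖m₃ - m₁‖ ≠ 0 := norm_ne_zero_iff.mpr (sub_ne_zero.mpr hd13.symm)
  have hw : ‖m₂ - m₁‖ ≠ 0 := norm_ne_zero_iff.mpr (sub_ne_zero.mpr hd12.symm)
  -- law of cosines identities
  have hI1 : 2 * (inner ℝ (m₃ - m₂) (m₃ - m₁) : ℝ)
      = ‖m₃ - m₂‖ ^ 2 + ‖m₃ - m₁‖ ^ 2 - ‖m₂ - m₁‖ ^ 2 := by
    have h := norm_sub_sq_real (m₃ - m₂) (m₃ - m₁)
    rw [show (m₃ - m₂) - (m₃ - m₁) = -(m₂ - m₁) by abel, norm_neg] at h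
    linarith
  have hI2 : 2 * (inner ℝ (m₃ - m₂) (m₂ - m₁) : ℝ)
      = ‖m₃ - m₁‖ ^ 2 - ‖m₃ - m₂‖ ^ 2 - ‖m₂ - m₁‖ ^ 2 := by
    have h := norm_add_sq_real (m₃ - m₂) (m₂ - m₁)
    rw [show (m₃ - m₂) + (m₂ - m₁) = m₃ - m₁ by abel] at h
    linarith
  have hI3 : 2 * (inner ℝ (m₃ - m₁) (m₂ - m₁) : ℝ)
      = ‖m₃ - m₁‖ ^ 2 + ‖m₂ - m₁‖ ^ 2 - ‖m₃ - m₂‖ ^ 2 := by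
    have h := norm_sub_sq_real (m₃ - m₁) (m₂ - m₁)
    rw [show (m₃ - m₁) - (m₂ - m₁) = m₃ - m₂ by abel] at h
    linarith
  -- the three key linear identities
  have hE1 : ‖m₃ - m₂‖ - a * ‖m₃ - m₁‖ + b * ‖m₂ - m₁‖ = 0 := by
    rw [ha, hb]
    exact auxE1 _ _ _ _ _ hu hv hw (by linarith)
  have hE2 : ‖m₃ - m₁‖ - a * ‖m₃ - m₂‖ - c * ‖m₂ - m₁‖ = 0 := by
    rw [ha, hc]
    exact auxE2 _ _ _ _ _ hu hv hw (by linarith)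
  have hE3 : ‖m₂ - m₁‖ + b * ‖m₃ - m₂‖ - c * ‖m₃ - m₁‖ = 0 := by
    rw [hb, hc]
    exact auxE3 _ _ _ _ _ hu hv hw (by linarith)
  intro ε₁ ε₂ ε₃ h₁ h₂ h₃ p hp
  have key : ∀ (ε : ℝ), (ε = 1 ∨ ε = -1) → ∀ x : EuclideanSpace ℝ (Fin 2),
      (ε * Real.sqrt ‖x‖) ^ 2 = ‖x‖ := by
    rintro ε (rfl | rfl) x <;>
      simp [mul_pow, Real.sq_sqrt (norm_nonneg x)]
  simp only [Set.mem_insert_iff, Set.mem_singleton_iff] at hp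
  rcases hp with rfl | rfl | rfl | rfl
  · -- p = ![0, ε₁√u, ε₂√v, ε₃√w]
    have hq1 := key ε₁ h₁ (m₃ - m₂)
    have hq2 := key ε₂ h₂ (m₃ - m₁)
    have hq3 := key ε₃ h₃ (m₂ - m₁)
    set S1 := ε₁ * Real.sqrt ‖m₃ - m₂‖
    set S2 := ε₂ * Real.sqrt ‖m₃ - m₁‖
    set S3 := ε₃ * Real.sqrt ‖m₂ - m₁‖
    constructor
    · rw [hG]
      simp only [Matrix.cons_val_zero, Matrix.cons_val_one, Matrix.cons_val_two,
        Matrix.cons_val_three, Matrix.head_cons, Matrix.tail_cons]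
      linear_combination S1 ^ 2 * hE1 + S2 ^ 2 * hE2 + S3 ^ 2 * hE3
        + (S1 ^ 2 - a * S2 ^ 2 + b * S3 ^ 2) * hq1
        + (S2 ^ 2 - a * S1 ^ 2 - c * S3 ^ 2) * hq2
        + (S3 ^ 2 + b * S1 ^ 2 - c * S2 ^ 2) * hq3
    · rw [hGfun]
      apply aux_fderiv <;>
        simp only [Matrix.cons_val_zero, Matrix.cons_val_one, Matrix.cons_val_two,
          Matrix.cons_val_three, Matrix.head_cons, Matrix.tail_cons]
      · ring
      · linear_combination S1 * hE1 + S1 * hq1 - (a * S1) * hq2 + (b * S1) * hq3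
      · linear_combination S2 * hE2 + S2 * hq2 - (a * S2) * hq1 - (c * S2) * hq3
      · linear_combination S3 * hE3 + S3 * hq3 + (b * S3) * hq1 - (c * S3) * hq2
  · -- p = ![ε₁√u, 0, ε₂√w, ε₃√v]
    have hq1 := key ε₁ h₁ (m₃ - m₂)
    have hq2 := key ε₂ h₂ (m₂ - m₁)
    have hq3 := key ε₃ h₃ (m₃ - m₁)
    set S1 := ε₁ * Real.sqrt ‖m₃ - m₂‖
    set S2 := ε₂ * Real.sqrt ‖m₂ - m₁‖
    set S3 := ε₃ * Real.sqrt ‖m₃ - m₁‖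
    constructor
    · rw [hG]
      simp only [Matrix.cons_val_zero, Matrix.cons_val_one, Matrix.cons_val_two,
        Matrix.cons_val_three, Matrix.head_cons, Matrix.tail_cons]
      linear_combination S1 ^ 2 * hE1 + S3 ^ 2 * hE2 + S2 ^ 2 * hE3
        + (S1 ^ 2 + b * S2 ^ 2 - a * S3 ^ 2) * hq1
        + (b * S1 ^ 2 + S2 ^ 2 - c * S3 ^ 2) * hq2
        + (-(a * S1 ^ 2) - c * S2 ^ 2 + S3 ^ 2) * hq3
    · rw [hGfun]
      apply aux_fderiv <;>
        simp only [Matrix.cons_val_zero, Matrix.cons_val_one, Matrix.cons_val_two,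
          Matrix.cons_val_three, Matrix.head_cons, Matrix.tail_cons]
      · linear_combination S1 * hE1 + S1 * hq1 - (a * S1) * hq3 + (b * S1) * hq2
      · ring
      · linear_combination S2 * hE3 + S2 * hq2 + (b * S2) * hq1 - (c * S2) * hq3
      · linear_combination S3 * hE2 + S3 * hq3 - (a * S3) * hq1 - (c * S3) * hq2
  · -- p = ![ε₁√v, ε₂√w, 0, ε₃√u]
    have hq1 := key ε₁ h₁ (m₃ - m₁)
    have hq2 := key ε₂ h₂ (m₂ - m₁)
    have hq3 := key ε₃ h₃ (m₃ - m₂)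
    set S1 := ε₁ * Real.sqrt ‖m₃ - m₁‖
    set S2 := ε₂ * Real.sqrt ‖m₂ - m₁‖
    set S3 := ε₃ * Real.sqrt ‖m₃ - m₂‖
    constructor
    · rw [hG]
      simp only [Matrix.cons_val_zero, Matrix.cons_val_one, Matrix.cons_val_two,
        Matrix.cons_val_three, Matrix.head_cons, Matrix.tail_cons]
      linear_combination S1 ^ 2 * hE2 + S2 ^ 2 * hE3 + S3 ^ 2 * hE1
        + (S1 ^ 2 - c * S2 ^ 2 - a * S3 ^ 2) * hq1
        + (-(c * S1 ^ 2) + S2 ^ 2 + b * S3 ^ 2) * hq2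
        + (-(a * S1 ^ 2) + b * S2 ^ 2 + S3 ^ 2) * hq3
    · rw [hGfun]
      apply aux_fderiv <;>
        simp only [Matrix.cons_val_zero, Matrix.cons_val_one, Matrix.cons_val_two,
          Matrix.cons_val_three, Matrix.head_cons, Matrix.tail_cons]
      · linear_combination S1 * hE2 + S1 * hq1 - (a * S1) * hq3 - (c * S1) * hq2
      · linear_combination S2 * hE3 + S2 * hq2 + (b * S2) * hq3 - (c * S2) * hq1
      · ring
      · linear_combination S3 * hE1 + S3 * hq3 - (a * S3) * hq1 + (b * S3) * hq2
  · -- p = ![ε₁√w, ε₂√v, ε₃√u, 0]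
    have hq1 := key ε₁ h₁ (m₂ - m₁)
    have hq2 := key ε₂ h₂ (m₃ - m₁)
    have hq3 := key ε₃ h₃ (m₃ - m₂)
    set S1 := ε₁ * Real.sqrt ‖m₂ - m₁‖
    set S2 := ε₂ * Real.sqrt ‖m₃ - m₁‖
    set S3 := ε₃ * Real.sqrt ‖m₃ - m₂‖
    constructor
    · rw [hG]
      simp only [Matrix.cons_val_zero, Matrix.cons_val_one, Matrix.cons_val_two,
        Matrix.cons_val_three, Matrix.head_cons, Matrix.tail_cons]
      linear_combination S1 ^ 2 * hE3 + S2 ^ 2 * hE2 + S3 ^ 2 * hE1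
        + (S1 ^ 2 - c * S2 ^ 2 + b * S3 ^ 2) * hq1
        + (-(c * S1 ^ 2) + S2 ^ 2 - a * S3 ^ 2) * hq2
        + (b * S1 ^ 2 - a * S2 ^ 2 + S3 ^ 2) * hq3
    · rw [hGfun]
      apply aux_fderiv <;>
        simp only [Matrix.cons_val_zero, Matrix.cons_val_one, Matrix.cons_val_two,
          Matrix.cons_val_three, Matrix.head_cons, Matrix.tail_cons]
      · linear_combination S1 * hE3 + S1 * hq1 + (b * S1) * hq3 - (c * S1) * hq2
      · linear_combination S2 * hE2 + S2 * hq2 - (a * S2) * hq3 - (c * S2) * hq1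
      · linear_combination S3 * hE1 + S3 * hq3 - (a * S3) * hq2 + (b * S3) * hq1
      · ring
end

section
/- Assume m₁, m₂, m₃ are not collinear. Then Q₃ is a convex set contained in the first octant W = {(𝒯₁,𝒯₂,𝒯₃) : 𝒯₁ ≥ 0, 𝒯₂ ≥ 0, 𝒯₃ ≥ 0}, it is unbounded along the direction (1,1,1) (for every 𝒯 ∈ Q₃ and every t ≥ 0, 𝒯 + t(1,1,1) ∈ Q₃), and the image of the range map satisfies Im(𝒯₃) ⊆ Q₃; in particular, for every x ∈ ℝ² the twelve inequalities defining Q₃ hold with 𝒯_i = d_i(x). -/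
/-- Q₃ is convex, contained in the first octant, unbounded along (1,1,1),
and contains the image of the range map 𝒯₃. -/
theorem stmt8 (m₁ m₂ m₃ : EuclideanSpace ℝ (Fin 2))
    (hnc : ¬ Collinear ℝ ({m₁, m₂, m₃} : Set (EuclideanSpace ℝ (Fin 2))))
    (Q3 : Set (ℝ × ℝ × ℝ))
    (hQ3 : Q3 = {T : ℝ × ℝ × ℝ |
      (-‖m₂ - m₁‖ ≤ T.1 - T.2.1 ∧ T.1 - T.2.1 ≤ ‖m₂ - m₁‖ ∧ ‖m₂ - m₁‖ ≤ T.1 + T.2.1) ∧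
      (-‖m₃ - m₁‖ ≤ T.1 - T.2.2 ∧ T.1 - T.2.2 ≤ ‖m₃ - m₁‖ ∧ ‖m₃ - m₁‖ ≤ T.1 + T.2.2) ∧
      (-‖m₃ - m₂‖ ≤ T.2.1 - T.2.2 ∧ T.2.1 - T.2.2 ≤ ‖m₃ - m₂‖ ∧ ‖m₃ - m₂‖ ≤ T.2.1 + T.2.2) ∧
      0 ≤ ‖m₃ - m₂‖ * T.1 + ‖m₃ - m₁‖ * T.2.1 - ‖m₂ - m₁‖ * T.2.2 ∧
      0 ≤ ‖m₃ - m₂‖ * T.1 - ‖m₃ - m₁‖ * T.2.1 + ‖m₂ - m₁‖ * T.2.2 ∧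
      0 ≤ -(‖m₃ - m₂‖ * T.1) + ‖m₃ - m₁‖ * T.2.1 + ‖m₂ - m₁‖ * T.2.2}) :
    Convex ℝ Q3 ∧
    Q3 ⊆ {T : ℝ × ℝ × ℝ | 0 ≤ T.1 ∧ 0 ≤ T.2.1 ∧ 0 ≤ T.2.2} ∧
    (∀ T ∈ Q3, ∀ t : ℝ, 0 ≤ t → T + t • ((1, 1, 1) : ℝ × ℝ × ℝ) ∈ Q3) ∧
    Set.range (fun x : EuclideanSpace ℝ (Fin 2) => (‖x - m₁‖, ‖x - m₂‖, ‖x - m₃‖)) ⊆ Q3 := by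
  subst hQ3
  have h21 : ‖m₂ - m₁‖ ≤ ‖m₃ - m₁‖ + ‖m₃ - m₂‖ := by
    have h := norm_sub_le (m₃ - m₁) (m₃ - m₂)
    have : (m₃ - m₁) - (m₃ - m₂) = m₂ - m₁ := by abel
    rw [this] at h; exact h
  have h31 : ‖m₃ - m₁‖ ≤ ‖m₂ - m₁‖ + ‖m₃ - m₂‖ := by
    have h := norm_add_le (m₃ - m₂) (m₂ - m₁)
    have : (m₃ - m₂) + (m₂ - m₁) = m₃ - m₁ := by abel
    rw [this] at h; linarith
  have h32 : ‖m₃ - m₂‖ ≤ ‖m₂ - m₁‖ + ‖m₃ - m₁‖ := by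
    have h := norm_sub_le (m₃ - m₁) (m₂ - m₁)
    have : (m₃ - m₁) - (m₂ - m₁) = m₃ - m₂ := by abel
    rw [this] at h; linarith
  refine ⟨?_, ?_, ?_, ?_⟩
  · -- convexity
    rintro ⟨T1, T2, T3⟩ hT ⟨U1, U2, U3⟩ hU a b ha hb hab
    obtain ⟨⟨t1, t2, t3⟩, ⟨t4, t5, t6⟩, ⟨t7, t8, t9⟩, t10, t11, t12⟩ := hT
    obtain ⟨⟨u1, u2, u3⟩, ⟨u4, u5, u6⟩, ⟨u7, u8, u9⟩, u10, u11, u12⟩ := hU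
    simp only [Set.mem_setOf_eq, Prod.smul_mk, smul_eq_mul, Prod.mk_add_mk] at *
    have e21 : a * ‖m₂ - m₁‖ + b * ‖m₂ - m₁‖ = ‖m₂ - m₁‖ := by
      rw [← add_mul, hab, one_mul]
    have e31 : a * ‖m₃ - m₁‖ + b * ‖m₃ - m₁‖ = ‖m₃ - m₁‖ := by
      rw [← add_mul, hab, one_mul]
    have e32 : a * ‖m₃ - m₂‖ + b * ‖m₃ - m₂‖ = ‖m₃ - m₂‖ := by
      rw [← add_mul, hab, one_mul]
    refine ⟨⟨?_, ?_, ?_⟩, ⟨?_, ?_, ?_⟩, ⟨?_, ?_, ?_⟩, ?_, ?_, ?_⟩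
    · linarith [mul_le_mul_of_nonneg_left t1 ha, mul_le_mul_of_nonneg_left u1 hb, e21]
    · linarith [mul_le_mul_of_nonneg_left t2 ha, mul_le_mul_of_nonneg_left u2 hb, e21]
    · linarith [mul_le_mul_of_nonneg_left t3 ha, mul_le_mul_of_nonneg_left u3 hb, e21]
    · linarith [mul_le_mul_of_nonneg_left t4 ha, mul_le_mul_of_nonneg_left u4 hb, e31]
    · linarith [mul_le_mul_of_nonneg_left t5 ha, mul_le_mul_of_nonneg_left u5 hb, e31]
    · linarith [mul_le_mul_of_nonneg_left t6 ha, mul_le_mul_of_nonneg_left u6 hb, e31]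
    · linarith [mul_le_mul_of_nonneg_left t7 ha, mul_le_mul_of_nonneg_left u7 hb, e32]
    · linarith [mul_le_mul_of_nonneg_left t8 ha, mul_le_mul_of_nonneg_left u8 hb, e32]
    · linarith [mul_le_mul_of_nonneg_left t9 ha, mul_le_mul_of_nonneg_left u9 hb, e32]
    · linarith [mul_nonneg ha t10, mul_nonneg hb u10]
    · linarith [mul_nonneg ha t11, mul_nonneg hb u11]
    · linarith [mul_nonneg ha t12, mul_nonneg hb u12]
  · -- first octant
    rintro ⟨T1, T2, T3⟩ ⟨⟨t1, t2, t3⟩, ⟨t4, t5, t6⟩, -⟩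
    exact ⟨by linarith, by linarith, by linarith⟩
  · -- unbounded along (1,1,1)
    rintro ⟨T1, T2, T3⟩ ⟨⟨t1, t2, t3⟩, ⟨t4, t5, t6⟩, ⟨t7, t8, t9⟩, t10, t11, t12⟩ t ht
    simp only [Set.mem_setOf_eq, Prod.smul_mk, smul_eq_mul, mul_one, Prod.mk_add_mk]
    have k21 := mul_le_mul_of_nonneg_left h21 ht
    have k31 := mul_le_mul_of_nonneg_left h31 ht
    have k32 := mul_le_mul_of_nonneg_left h32 ht
    refine ⟨⟨by linarith, by linarith, by linarith⟩,
      ⟨by linarith, by linarith, by linarith⟩,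
      ⟨by linarith, by linarith, by linarith⟩, by linarith [k21], by linarith [k31],
      by linarith [k32]⟩
  · -- image of the range map
    rintro p ⟨x, rfl⟩
    simp only [Set.mem_setOf_eq]
    have a21 := abs_norm_sub_norm_le (x - m₁) (x - m₂)
    have e21 : (x - m₁) - (x - m₂) = m₂ - m₁ := by abel
    rw [e21, abs_le] at a21
    have a31 := abs_norm_sub_norm_le (x - m₁) (x - m₃)
    have e31 : (x - m₁) - (x - m₃) = m₃ - m₁ := by abel
    rw [e31, abs_le] at a31
    have a32 := abs_norm_sub_norm_le (x - m₂) (x - m₃)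
    have e32 : (x - m₂) - (x - m₃) = m₃ - m₂ := by abel
    rw [e32, abs_le] at a32
    have s21 : ‖m₂ - m₁‖ ≤ ‖x - m₁‖ + ‖x - m₂‖ := by
      have h := norm_sub_le (x - m₁) (x - m₂)
      rw [e21] at h; linarith
    have s31 : ‖m₃ - m₁‖ ≤ ‖x - m₁‖ + ‖x - m₃‖ := by
      have h := norm_sub_le (x - m₁) (x - m₃)
      rw [e31] at h; linarith
    have s32 : ‖m₃ - m₂‖ ≤ ‖x - m₂‖ + ‖x - m₃‖ := by
      have h := norm_sub_le (x - m₂) (x - m₃)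
      rw [e32] at h; linarith
    have p1 := EuclideanGeometry.mul_dist_le_mul_dist_add_mul_dist m₁ x m₂ m₃
    have p2 := EuclideanGeometry.mul_dist_le_mul_dist_add_mul_dist m₁ x m₃ m₂
    have p3 := EuclideanGeometry.mul_dist_le_mul_dist_add_mul_dist m₂ x m₃ m₁
    simp only [dist_eq_norm] at p1 p2 p3
    rw [show ‖m₁ - m₂‖ = ‖m₂ - m₁‖ from norm_sub_rev _ _,
      show ‖m₁ - x‖ = ‖x - m₁‖ from norm_sub_rev _ _,
      show ‖m₂ - m₃‖ = ‖m₃ - m₂‖ from norm_sub_rev _ _,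
      show ‖m₁ - m₃‖ = ‖m₃ - m₁‖ from norm_sub_rev _ _] at p1
    rw [show ‖m₁ - m₃‖ = ‖m₃ - m₁‖ from norm_sub_rev _ _,
      show ‖m₁ - x‖ = ‖x - m₁‖ from norm_sub_rev _ _,
      show ‖m₁ - m₂‖ = ‖m₂ - m₁‖ from norm_sub_rev _ _] at p2
    rw [show ‖m₂ - m₃‖ = ‖m₃ - m₂‖ from norm_sub_rev _ _,
      show ‖m₂ - x‖ = ‖x - m₂‖ from norm_sub_rev _ _,
      show ‖m₂ - m₁‖ = ‖m₂ - m₁‖ from rfl,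
      show ‖m₃ - m₁‖ = ‖m₃ - m₁‖ from rfl] at p3
    exact ⟨⟨a21.1, a21.2, s21⟩, ⟨a31.1, a31.2, s31⟩, ⟨a32.1, a32.2, s32⟩,
      by linarith, by linarith, by linarith⟩
end

section
/- (i) If m₁, m₂, m₃ ∈ ℝ² are not collinear, then a := ((m₃−m₂)·(m₃−m₁))/(d₃₂ d₃₁) and c := ((m₃−m₁)·(m₂−m₁))/(d₃₁ d₂₁) satisfy −1 < a < 1, −1 < c < 1 and a + c > 0. (ii) Conversely, for every pair (a,c) ∈ (−1,1) × (−1,1) with a + c > 0 and every L > 0, there exist non-collinear points m₁, m₂, m₃ ∈ ℝ² with ‖m₂ − m₁‖ = L, ((m₃−m₂)·(m₃−m₁))/(d₃₂ d₃₁) = a and ((m₃−m₁)·(m₂−m₁))/(d₃₁ d₂₁) = c. Thus the parameter space of planar three-receiver configurations (up to rigid motions and reflections) is {(a,c) ∈ (−1,1)² : a + c > 0} × ℝ⁺. -/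
open EuclideanGeometry Real

set_option maxHeartbeats 1000000

private lemma stmt10.norm_eq_of_sq {x : EuclideanSpace ℝ (Fin 2)} {r : ℝ} (hr : 0 ≤ r)
    (h : (inner ℝ x x : ℝ) = r ^ 2) : ‖x‖ = r := by
  have h1 : ‖x‖ ^ 2 = r ^ 2 := by rw [← real_inner_self_eq_norm_sq]; exact h
  nlinarith [norm_nonneg x]

/-- characterization of the parameter space of planar three-receiver
configurations: (i) non-collinear receivers give (a,c) ∈ (−1,1)² with a + c > 0;
(ii) conversely every such (a,c) and every scale L > 0 is realized by some
non-collinear configuration. -/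
theorem stmt10 :
    (∀ m₁ m₂ m₃ : EuclideanSpace ℝ (Fin 2),
      ¬ Collinear ℝ ({m₁, m₂, m₃} : Set (EuclideanSpace ℝ (Fin 2))) →
      (-1 < (inner ℝ (m₃ - m₂) (m₃ - m₁) : ℝ) / (‖m₃ - m₂‖ * ‖m₃ - m₁‖) ∧
       (inner ℝ (m₃ - m₂) (m₃ - m₁) : ℝ) / (‖m₃ - m₂‖ * ‖m₃ - m₁‖) < 1 ∧
       -1 < (inner ℝ (m₃ - m₁) (m₂ - m₁) : ℝ) / (‖m₃ - m₁‖ * ‖m₂ - m₁‖) ∧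
       (inner ℝ (m₃ - m₁) (m₂ - m₁) : ℝ) / (‖m₃ - m₁‖ * ‖m₂ - m₁‖) < 1 ∧
       0 < (inner ℝ (m₃ - m₂) (m₃ - m₁) : ℝ) / (‖m₃ - m₂‖ * ‖m₃ - m₁‖) +
           (inner ℝ (m₃ - m₁) (m₂ - m₁) : ℝ) / (‖m₃ - m₁‖ * ‖m₂ - m₁‖))) ∧
    (∀ a c L : ℝ, -1 < a → a < 1 → -1 < c → c < 1 → 0 < a + c → 0 < L →
      ∃ m₁ m₂ m₃ : EuclideanSpace ℝ (Fin 2),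
        ¬ Collinear ℝ ({m₁, m₂, m₃} : Set (EuclideanSpace ℝ (Fin 2))) ∧
        ‖m₂ - m₁‖ = L ∧
        (inner ℝ (m₃ - m₂) (m₃ - m₁) : ℝ) / (‖m₃ - m₂‖ * ‖m₃ - m₁‖) = a ∧
        (inner ℝ (m₃ - m₁) (m₂ - m₁) : ℝ) / (‖m₃ - m₁‖ * ‖m₂ - m₁‖) = c) := by
  constructor
  · intro m₁ m₂ m₃ hcol
    have hset1 : ({m₂, m₃, m₁} : Set (EuclideanSpace ℝ (Fin 2))) = {m₁, m₂, m₃} := by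
      ext x; simp; tauto
    have hset2 : ({m₃, m₁, m₂} : Set (EuclideanSpace ℝ (Fin 2))) = {m₁, m₂, m₃} := by
      ext x; simp; tauto
    have h21 : m₂ ≠ m₁ := by
      rintro rfl
      apply hcol
      have : ({m₂, m₂, m₃} : Set (EuclideanSpace ℝ (Fin 2))) = {m₂, m₃} := by ext x; simp
      rw [this]; exact collinear_pair ℝ _ _
    have h31 : m₃ ≠ m₁ := by
      rintro rfl
      apply hcol
      have : ({m₃, m₂, m₃} : Set (EuclideanSpace ℝ (Fin 2))) = {m₃, m₂} := by ext x; simp; tauto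
      rw [this]; exact collinear_pair ℝ _ _
    set α := ∠ m₃ m₁ m₂ with hα
    set β := ∠ m₁ m₂ m₃ with hβ
    set γ := ∠ m₂ m₃ m₁ with hγ
    have hsum : β + γ + α = π := angle_add_angle_add_angle_eq_pi m₃ h21
    have hγ0 : γ ≠ 0 ∧ γ ≠ π := by
      constructor <;> intro h <;>
        exact hcol (hset1 ▸ (EuclideanGeometry.collinear_iff_eq_or_eq_or_angle_eq_zero_or_angle_eq_pi (p₁ := m₂) (p₂ := m₃) (p₃ := m₁)).2 (by tauto))
    have hα0 : α ≠ 0 ∧ α ≠ π := by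
      constructor <;> intro h <;>
        exact hcol (hset2 ▸ (EuclideanGeometry.collinear_iff_eq_or_eq_or_angle_eq_zero_or_angle_eq_pi (p₁ := m₃) (p₂ := m₁) (p₃ := m₂)).2 (by tauto))
    have hβ0 : β ≠ 0 := by
      intro h
      exact hcol ((EuclideanGeometry.collinear_iff_eq_or_eq_or_angle_eq_zero_or_angle_eq_pi (p₁ := m₁) (p₂ := m₂) (p₃ := m₃)).2 (by tauto))
    have hαIcc : α ∈ Set.Icc 0 π := ⟨EuclideanGeometry.angle_nonneg _ _ _, EuclideanGeometry.angle_le_pi _ _ _⟩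
    have hγIcc : γ ∈ Set.Icc 0 π := ⟨EuclideanGeometry.angle_nonneg _ _ _, EuclideanGeometry.angle_le_pi _ _ _⟩
    have hβIcc : β ∈ Set.Icc 0 π := ⟨EuclideanGeometry.angle_nonneg _ _ _, EuclideanGeometry.angle_le_pi _ _ _⟩
    have hπ : 0 < π := Real.pi_pos
    have hαlt : 0 < α ∧ α < π := ⟨lt_of_le_of_ne hαIcc.1 (Ne.symm hα0.1), lt_of_le_of_ne hαIcc.2 hα0.2⟩
    have hγlt : 0 < γ ∧ γ < π := ⟨lt_of_le_of_ne hγIcc.1 (Ne.symm hγ0.1), lt_of_le_of_ne hγIcc.2 hγ0.2⟩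
    have hβpos : 0 < β := lt_of_le_of_ne hβIcc.1 (Ne.symm hβ0)
    -- ratios as cosines
    have hra : (inner ℝ (m₃ - m₂) (m₃ - m₁) : ℝ) / (‖m₃ - m₂‖ * ‖m₃ - m₁‖) = Real.cos γ := by
      rw [hγ, EuclideanGeometry.angle, InnerProductGeometry.cos_angle, vsub_eq_sub, vsub_eq_sub,
        ← neg_sub m₃ m₂, ← neg_sub m₃ m₁, inner_neg_neg, norm_neg, norm_neg]
    have hrc : (inner ℝ (m₃ - m₁) (m₂ - m₁) : ℝ) / (‖m₃ - m₁‖ * ‖m₂ - m₁‖) = Real.cos α := by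
      rw [hα, EuclideanGeometry.angle, InnerProductGeometry.cos_angle, vsub_eq_sub, vsub_eq_sub]
    rw [hra, hrc]
    have c1 : Real.cos γ < 1 := by
      have := Real.strictAntiOn_cos (Set.left_mem_Icc.2 hπ.le) hγIcc hγlt.1
      simpa using this
    have c2 : -1 < Real.cos γ := by
      have := Real.strictAntiOn_cos hγIcc (Set.right_mem_Icc.2 hπ.le) hγlt.2
      simpa using this
    have c3 : Real.cos α < 1 := by
      have := Real.strictAntiOn_cos (Set.left_mem_Icc.2 hπ.le) hαIcc hαlt.1
      simpa using this
    have c4 : -1 < Real.cos α := by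
      have := Real.strictAntiOn_cos hαIcc (Set.right_mem_Icc.2 hπ.le) hαlt.2
      simpa using this
    have c5 : 0 < Real.cos γ + Real.cos α := by
      have hlt : γ < π - α := by linarith
      have hmem : π - α ∈ Set.Icc 0 π := ⟨by linarith [hαIcc.2], by linarith [hαIcc.1]⟩
      have := Real.strictAntiOn_cos hγIcc hmem hlt
      rw [Real.cos_pi_sub] at this
      linarith
    exact ⟨c2, c1, c4, c3, c5⟩
  · intro a c L ha1 ha2 hc1 hc2 hac hL
    set s := Real.sqrt (1 - a ^ 2) with hs_def
    set t := Real.sqrt (1 - c ^ 2) with ht_def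
    have hs : 0 < s := Real.sqrt_pos.2 (by nlinarith)
    have ht : 0 < t := Real.sqrt_pos.2 (by nlinarith)
    have hs2 : s ^ 2 = 1 - a ^ 2 := Real.sq_sqrt (by nlinarith)
    have ht2 : t ^ 2 = 1 - c ^ 2 := Real.sq_sqrt (by nlinarith)
    have hsin : 0 < t * a + c * s := by
      rcases le_or_gt 0 a with ha | ha
      · rcases le_or_gt 0 c with hc | hc
        · rcases lt_or_eq_of_le ha with ha' | ha'
          · nlinarith
          · nlinarith
        · -- c < 0, so a > -c > 0, a² > c²
          nlinarith [mul_pos (show (0:ℝ) < a - c by linarith) hac, mul_pos ht hs]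
      · -- a < 0, c > -a > 0
        nlinarith [mul_pos (show (0:ℝ) < c - a by linarith) hac, mul_pos ht hs]
    obtain ⟨r, hr, hrs⟩ : ∃ r : ℝ, 0 < r ∧ r * s = L * (t * a + c * s) :=
      ⟨L * (t * a + c * s) / s, by positivity, by field_simp⟩
    set e₀ : EuclideanSpace ℝ (Fin 2) := EuclideanSpace.single 0 1 with he0
    set e₁ : EuclideanSpace ℝ (Fin 2) := EuclideanSpace.single 1 1 with he1
    have h00 : (inner ℝ e₀ e₀ : ℝ) = 1 := by
      simp [he0, EuclideanSpace.inner_single_left, EuclideanSpace.single_apply]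
    have h01 : (inner ℝ e₀ e₁ : ℝ) = 0 := by
      simp [he0, he1, EuclideanSpace.inner_single_left, EuclideanSpace.single_apply]
    have h10 : (inner ℝ e₁ e₀ : ℝ) = 0 := by
      simp [he0, he1, EuclideanSpace.inner_single_left, EuclideanSpace.single_apply]
    have h11 : (inner ℝ e₁ e₁ : ℝ) = 1 := by
      simp [he1, EuclideanSpace.inner_single_left, EuclideanSpace.single_apply]
    refine ⟨0, L • e₀, (r * c) • e₀ + (r * t) • e₁, ?_, ?_, ?_, ?_⟩
    · -- not collinear
      intro hcol
      rw [collinear_iff_of_mem (Set.mem_insert _ _)] at hcol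
      obtain ⟨v, hv⟩ := hcol
      obtain ⟨k₂, hk₂⟩ := hv (L • e₀) (by simp)
      obtain ⟨k₃, hk₃⟩ := hv ((r * c) • e₀ + (r * t) • e₁) (by simp)
      have h1 := congrArg (fun x : EuclideanSpace ℝ (Fin 2) => x 1) hk₂
      have h0 := congrArg (fun x : EuclideanSpace ℝ (Fin 2) => x 0) hk₂
      have h31 := congrArg (fun x : EuclideanSpace ℝ (Fin 2) => x 1) hk₃
      simp [he0, he1, EuclideanSpace.single_apply] at h1 h0 h31
      rcases h1 with h | h
      · rw [h, zero_mul] at h0; exact hL.ne' h0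
      · rw [h, mul_zero] at h31
        exact (mul_pos hr ht).ne' h31
    · -- ‖m₂ - m₁‖ = L
      rw [sub_zero]
      refine stmt10.norm_eq_of_sq hL.le ?_
      rw [real_inner_smul_left, real_inner_smul_right, h00]; ring
    · -- a equation
      have hn31 : ‖(r * c) • e₀ + (r * t) • e₁ - 0‖ = r := by
        refine stmt10.norm_eq_of_sq hr.le ?_
        rw [sub_zero]
        simp only [inner_add_left, inner_add_right, real_inner_smul_left, real_inner_smul_right,
          h00, h01, h10, h11]
        linear_combination r ^ 2 * ht2
      have hkey : (((r * c) - L) ^ 2 + r ^ 2 * t ^ 2) * s ^ 2 = (L * t) ^ 2 := by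
        linear_combination (r * s + L * (t * a + c * s) - 2 * L * c * s) * hrs +
          (L ^ 2 * t ^ 2) * hs2 + (r ^ 2 * s ^ 2 - L ^ 2 * s ^ 2) * ht2
      have hn32 : ‖(r * c) • e₀ + (r * t) • e₁ - L • e₀‖ = L * t / s := by
        refine stmt10.norm_eq_of_sq (by positivity) ?_
        simp only [inner_sub_left, inner_sub_right, inner_add_left, inner_add_right,
          real_inner_smul_left, real_inner_smul_right, h00, h01, h10, h11]
        rw [show (L * t / s : ℝ) ^ 2 = (L * t) ^ 2 / s ^ 2 by ring,
          eq_div_iff (by positivity : (s : ℝ) ^ 2 ≠ 0)]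
        linear_combination hkey
      have hinner : (inner ℝ ((r * c) • e₀ + (r * t) • e₁ - L • e₀)
          ((r * c) • e₀ + (r * t) • e₁ - 0) : ℝ) = r ^ 2 - L * r * c := by
        simp only [sub_zero, inner_sub_left, inner_add_left, inner_add_right,
          real_inner_smul_left, real_inner_smul_right, h00, h01, h10, h11]
        linear_combination r ^ 2 * ht2
      rw [hinner, hn31, hn32]
      rw [div_eq_iff (by positivity), show a * (L * t / s * r) = a * L * t * r / s by ring,
        eq_div_iff hs.ne']
      linear_combination r * hrs
    · -- c equation
      have hn31 : ‖(r * c) • e₀ + (r * t) • e₁ - 0‖ = r := by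
        refine stmt10.norm_eq_of_sq hr.le ?_
        rw [sub_zero]
        simp only [inner_add_left, inner_add_right, real_inner_smul_left, real_inner_smul_right,
          h00, h01, h10, h11]
        linear_combination r ^ 2 * ht2
      have hn21 : ‖L • e₀ - (0 : EuclideanSpace ℝ (Fin 2))‖ = L := by
        rw [sub_zero]
        refine stmt10.norm_eq_of_sq hL.le ?_
        rw [real_inner_smul_left, real_inner_smul_right, h00]; ring
      have hinner : (inner ℝ ((r * c) • e₀ + (r * t) • e₁ - 0) (L • e₀ - 0) : ℝ) = r * c * L := by
        simp only [sub_zero, inner_add_left, real_inner_smul_left, real_inner_smul_right,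
          h00, h01, h10, h11]
        ring
      rw [hinner, hn31, hn21]
      rw [div_eq_iff (by positivity)]
      ring
end

section
/- Let m₁ ≠ m₂ ∈ ℝ², d₂₁ = ‖m₂ − m₁‖ and 0 < ρ < 1. Then: (i) for every (𝒯₁,𝒯₂) ∈ Q₂ one has (1−ρ)𝒯₁² + ρ𝒯₂² − ρ(1−ρ)d₂₁² ≥ 0, so that φ(𝒯₁,𝒯₂) := √((1−ρ)𝒯₁² + ρ𝒯₂² − ρ(1−ρ)d₂₁²) is well defined on Q₂; (ii) σ ∩ Q₃ equals the graph {(𝒯₁, 𝒯₂, φ(𝒯₁,𝒯₂)) : (𝒯₁,𝒯₂) ∈ Q₂}. -/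
/-- (i) the function φ is well defined on Q₂; (ii) σ ∩ Q₃ is the graph of
φ over Q₂. -/
theorem stmt13 (d21 ρ : ℝ) (hd : 0 < d21) (hρ1 : 0 < ρ) (hρ2 : ρ < 1)
    (Q2 : Set (ℝ × ℝ))
    (hQ2 : Q2 = {p : ℝ × ℝ | p.1 - p.2 ≤ d21 ∧ p.2 - p.1 ≤ d21 ∧ d21 ≤ p.1 + p.2})
    (Q3 : Set (ℝ × ℝ × ℝ))
    (hQ3 : Q3 = {T : ℝ × ℝ × ℝ |
      T.1 - T.2.2 ≤ ρ * d21 ∧ T.2.1 - T.2.2 ≤ (1 - ρ) * d21 ∧ d21 ≤ T.1 + T.2.1 ∧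
      0 ≤ (1 - ρ) * d21 * T.1 + ρ * d21 * T.2.1 - d21 * T.2.2})
    (σ : Set (ℝ × ℝ × ℝ))
    (hσ : σ = {T : ℝ × ℝ × ℝ |
      T.2.2 ^ 2 = (1 - ρ) * T.1 ^ 2 + ρ * T.2.1 ^ 2 - ρ * (1 - ρ) * d21 ^ 2}) :
    (∀ p ∈ Q2, 0 ≤ (1 - ρ) * p.1 ^ 2 + ρ * p.2 ^ 2 - ρ * (1 - ρ) * d21 ^ 2) ∧
    σ ∩ Q3 = {T : ℝ × ℝ × ℝ | (T.1, T.2.1) ∈ Q2 ∧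
      T.2.2 = Real.sqrt ((1 - ρ) * T.1 ^ 2 + ρ * T.2.1 ^ 2 - ρ * (1 - ρ) * d21 ^ 2)} := by
  subst hQ2 hQ3 hσ
  have hρ1' : 0 < 1 - ρ := by linarith
  constructor
  · rintro ⟨a, b⟩ ⟨h1, h2, h3⟩
    simp only at h1 h2 h3 ⊢
    nlinarith [sq_nonneg ((1 - ρ) * a - ρ * b),
      mul_nonneg (le_of_lt (mul_pos hρ1 hρ1'))
        (mul_nonneg (by linarith : (0:ℝ) ≤ a + b - d21) (by linarith : (0:ℝ) ≤ a + b + d21))]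
  · ext ⟨a, b, c⟩
    simp only [Set.mem_inter_iff, Set.mem_setOf_eq]
    constructor
    · rintro ⟨hσ', h1, h2, h3, h4⟩
      have hc0 : 0 ≤ c := by linarith
      have h4' : c ≤ (1 - ρ) * a + ρ * b := by nlinarith
      have hab : (a - b) ^ 2 ≤ d21 ^ 2 := by
        nlinarith [mul_pos hρ1 hρ1', mul_nonneg (by linarith : (0:ℝ) ≤ (1 - ρ) * a + ρ * b - c)
          (by linarith : (0:ℝ) ≤ (1 - ρ) * a + ρ * b + c)]
      have hab1 : a - b ≤ d21 := by nlinarith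
      have hab2 : b - a ≤ d21 := by nlinarith
      refine ⟨⟨hab1, hab2, h3⟩, ?_⟩
      rw [← hσ', Real.sqrt_sq hc0]
    · rintro ⟨⟨h1, h2, h3⟩, hc⟩
      set E := (1 - ρ) * a ^ 2 + ρ * b ^ 2 - ρ * (1 - ρ) * d21 ^ 2 with hE
      have ha0 : 0 ≤ a := by linarith
      have hb0 : 0 ≤ b := by linarith
      have hE0 : 0 ≤ E := by
        nlinarith [sq_nonneg ((1 - ρ) * a - ρ * b),
          mul_nonneg (le_of_lt (mul_pos hρ1 hρ1'))
            (mul_nonneg (by linarith : (0:ℝ) ≤ a + b - d21) (by linarith : (0:ℝ) ≤ a + b + d21))]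
      have hc0 : 0 ≤ c := hc ▸ Real.sqrt_nonneg E
      have hcsq : c ^ 2 = E := by rw [hc, Real.sq_sqrt hE0]
      refine ⟨hcsq, ?_, ?_, h3, ?_⟩
      · rcases le_or_gt (a - ρ * d21) 0 with h | h
        · linarith
        · have : (a - ρ * d21) ^ 2 ≤ E := by
            nlinarith [mul_nonneg (by linarith : (0:ℝ) ≤ b - a + d21)
              (by linarith : (0:ℝ) ≤ a + b - d21)]
          nlinarith
      · rcases le_or_gt (b - (1 - ρ) * d21) 0 with h | h
        · linarith
        · have : (b - (1 - ρ) * d21) ^ 2 ≤ E := by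
            nlinarith [mul_nonneg (by linarith : (0:ℝ) ≤ a - b + d21)
              (by linarith : (0:ℝ) ≤ a + b - d21)]
          nlinarith
      · have hlin : 0 ≤ (1 - ρ) * a + ρ * b := by positivity
        have hsq : c ^ 2 ≤ ((1 - ρ) * a + ρ * b) ^ 2 := by
          rw [hcsq]
          nlinarith [mul_pos hρ1 hρ1', mul_nonneg (by linarith : (0:ℝ) ≤ d21 - (a - b))
            (by linarith : (0:ℝ) ≤ d21 + (a - b))]
        have : c ≤ (1 - ρ) * a + ρ * b := by nlinarith
        nlinarith
end

section
/- Suppose m₃ − m₁ = ρ(m₂ − m₁) for some ρ ∈ ℝ (collinear receivers). Then for all (𝒯₁,𝒯₂,𝒯₃) ∈ ℝ³ the quartic F factors as a perfect square: F(𝒯₁,𝒯₂,𝒯₃) = d₂₁²·((1−ρ)𝒯₁² + ρ𝒯₂² − 𝒯₃² − ρ(1−ρ)d₂₁²)². In other words, when the receivers degenerate to an aligned configuration, the Kummer quartic surface degenerates to a double quadric. -/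
/-- for collinear receivers, the Kummer quartic F degenerates to a
double quadric: F = d₂₁²·((1−ρ)𝒯₁² + ρ𝒯₂² − 𝒯₃² − ρ(1−ρ)d₂₁²)². -/
theorem stmt15 (m₁ m₂ m₃ : EuclideanSpace ℝ (Fin 2))
    (hd12 : m₁ ≠ m₂) (hd13 : m₁ ≠ m₃) (hd23 : m₂ ≠ m₃)
    (ρ : ℝ) (hcol : m₃ - m₁ = ρ • (m₂ - m₁)) :
    ∀ T₁ T₂ T₃ : ℝ,
      ‖m₃ - m₂‖ ^ 2 * T₁ ^ 4 + ‖m₃ - m₁‖ ^ 2 * T₂ ^ 4 + ‖m₂ - m₁‖ ^ 2 * T₃ ^ 4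
      - 2 * (inner ℝ (m₃ - m₂) (m₃ - m₁) : ℝ) * T₁ ^ 2 * T₂ ^ 2
      + 2 * (inner ℝ (m₃ - m₂) (m₂ - m₁) : ℝ) * T₁ ^ 2 * T₃ ^ 2
      - 2 * (inner ℝ (m₃ - m₁) (m₂ - m₁) : ℝ) * T₂ ^ 2 * T₃ ^ 2
      - 2 * (inner ℝ (m₂ - m₁) (m₃ - m₁) : ℝ) * ‖m₃ - m₂‖ ^ 2 * T₁ ^ 2
      + 2 * (inner ℝ (m₃ - m₂) (m₂ - m₁) : ℝ) * ‖m₃ - m₁‖ ^ 2 * T₂ ^ 2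
      - 2 * (inner ℝ (m₃ - m₂) (m₃ - m₁) : ℝ) * ‖m₂ - m₁‖ ^ 2 * T₃ ^ 2
      + ‖m₂ - m₁‖ ^ 2 * ‖m₃ - m₁‖ ^ 2 * ‖m₃ - m₂‖ ^ 2 =
      ‖m₂ - m₁‖ ^ 2 *
        ((1 - ρ) * T₁ ^ 2 + ρ * T₂ ^ 2 - T₃ ^ 2 - ρ * (1 - ρ) * ‖m₂ - m₁‖ ^ 2) ^ 2 := by
  intro T₁ T₂ T₃
  have h32 : m₃ - m₂ = (ρ - 1) • (m₂ - m₁) := by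
    have : m₃ - m₂ = (m₃ - m₁) - (m₂ - m₁) := by abel
    rw [this, hcol, sub_smul, one_smul]
  rw [hcol, h32]
  simp only [norm_smul, inner_smul_left, inner_smul_right, real_inner_self_eq_norm_sq,
    Real.norm_eq_abs, mul_pow, sq_abs, map_mul, conj_trivial]
  ring
end

section
/- The map 𝒯_{3,2} is differentiable on D = ℝ³ ∖ {m₁, m₂}, and its derivative at x ∈ D is represented by the 2×3 matrix whose i-th row is the unit vector (x − m_i)/d_i(x). For x ∈ D, this matrix has rank 1 if x lies on the line through m₁ and m₂, and rank 2 otherwise. -/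
lemma myNorm_hasFDerivAt {F : Type*} [NormedAddCommGroup F] [InnerProductSpace ℝ F]
    {y : F} (hy : y ≠ 0) :
    HasFDerivAt (fun z : F => ‖z‖) (‖y‖⁻¹ • innerSL ℝ y) y := by
  have hn : ‖y‖ ≠ 0 := norm_ne_zero_iff.2 hy
  have h1 : HasFDerivAt (fun z : F => ‖z‖ ^ 2) (2 • innerSL ℝ y) y :=
    (hasStrictFDerivAt_norm_sq y).hasFDerivAt
  have hs : HasDerivAt Real.sqrt (1 / (2 * Real.sqrt (‖y‖ ^ 2))) (‖y‖ ^ 2) :=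
    Real.hasDerivAt_sqrt (pow_ne_zero 2 hn)
  have key := hs.comp_hasFDerivAt y h1
  have hfun : (Real.sqrt ∘ fun z : F => ‖z‖ ^ 2) = fun z : F => ‖z‖ := by
    funext z; simp [Real.sqrt_sq (norm_nonneg z)]
  rw [hfun] at key
  refine key.congr_fderiv ?_
  ext v
  simp [Real.sqrt_sq (norm_nonneg y)]
  field_simp

lemma myCollinear_iff {m0 m1 x : EuclideanSpace ℝ (Fin 3)} (h0 : x ≠ m0) :
    Collinear ℝ ({m0, m1, x} : Set (EuclideanSpace ℝ (Fin 3))) ↔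
      ∃ c : ℝ, x - m1 = c • (x - m0) := by
  rw [collinear_iff_of_mem (show x ∈ ({m0, m1, x} : Set _) by simp)]
  constructor
  · rintro ⟨v, hv⟩
    obtain ⟨c0, hc0⟩ := hv m0 (by simp)
    obtain ⟨c1, hc1⟩ := hv m1 (by simp)
    rw [vadd_eq_add] at hc0 hc1
    have hx0 : x - m0 = (-c0) • v := by rw [hc0]; module
    have hx1 : x - m1 = (-c1) • v := by rw [hc1]; module
    have hc0ne : c0 ≠ 0 := by
      rintro rfl
      apply h0
      rw [hc0]; module
    refine ⟨c1 / c0, ?_⟩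
    rw [hx1, hx0, smul_smul]
    congr 1
    field_simp
  · rintro ⟨c, hc⟩
    refine ⟨x - m0, fun p hp => ?_⟩
    simp only [Set.mem_insert_iff, Set.mem_singleton_iff] at hp
    simp only [vadd_eq_add]
    rcases hp with rfl | rfl | rfl
    · exact ⟨-1, by module⟩
    · refine ⟨-c, ?_⟩
      have h2 : p = x - (x - p) := by module
      nth_rewrite 1 [h2]
      rw [hc]; module
    · exact ⟨0, by module⟩

/-- 𝒯_{3,2} is differentiable on ℝ³ ∖ {m₁, m₂} with Jacobian whose i-th
row is (x − mᵢ)/dᵢ(x); the Jacobian has rank 1 on the line through m₁, m₂ and rank 2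
elsewhere. -/
theorem stmt16 (m : Fin 2 → EuclideanSpace ℝ (Fin 3)) (hm : Function.Injective m)
    (J : EuclideanSpace ℝ (Fin 3) → Matrix (Fin 2) (Fin 3) ℝ)
    (hJ : ∀ x i l, J x i l = (x l - m i l) / ‖x - m i‖)
    (T : EuclideanSpace ℝ (Fin 3) → EuclideanSpace ℝ (Fin 2))
    (hT : ∀ x i, T x i = ‖x - m i‖) :
    (∀ x : EuclideanSpace ℝ (Fin 3), (∀ i, x ≠ m i) →
      HasFDerivAt T (LinearMap.toContinuousLinearMap (Matrix.toEuclideanLin (J x))) x) ∧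
    (∀ x : EuclideanSpace ℝ (Fin 3), (∀ i, x ≠ m i) →
      ((Collinear ℝ ({m 0, m 1, x} : Set (EuclideanSpace ℝ (Fin 3))) → (J x).rank = 1) ∧
       (¬ Collinear ℝ ({m 0, m 1, x} : Set (EuclideanSpace ℝ (Fin 3))) → (J x).rank = 2))) := by
  constructor
  · intro x hx
    set D : Fin 2 → (EuclideanSpace ℝ (Fin 3) →L[ℝ] ℝ) :=
      fun i => ‖x - m i‖⁻¹ • innerSL ℝ (x - m i) with hD
    have hcoord : ∀ i, HasFDerivAt (fun z : EuclideanSpace ℝ (Fin 3) => ‖z - m i‖) (D i) x := by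
      intro i
      have hsub : HasFDerivAt (fun z : EuclideanSpace ℝ (Fin 3) => z - m i)
          (ContinuousLinearMap.id ℝ _) x := (hasFDerivAt_id x).sub_const (m i)
      have := (myNorm_hasFDerivAt (sub_ne_zero.2 (hx i))).comp x hsub
      simpa only [Function.comp_def, ContinuousLinearMap.comp_id] using this
    have hpi : HasFDerivAt (fun z : EuclideanSpace ℝ (Fin 3) => fun i : Fin 2 => ‖z - m i‖)
        (ContinuousLinearMap.pi D) x := hasFDerivAt_pi'' hcoord
    set L : (Fin 2 → ℝ) →L[ℝ] EuclideanSpace ℝ (Fin 2) :=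
      (EuclideanSpace.equiv (Fin 2) ℝ).symm.toContinuousLinearMap with hL
    have hcomp := L.hasFDerivAt.comp x hpi
    have hTf : T = (fun z : EuclideanSpace ℝ (Fin 3) => L (fun i : Fin 2 => ‖z - m i‖)) := by
      funext z
      ext i
      exact hT z i
    rw [hTf]
    refine hcomp.congr_fderiv ?_
    apply ContinuousLinearMap.ext
    intro v
    ext i
    have h1 : (LinearMap.toContinuousLinearMap (Matrix.toEuclideanLin (J x))) v i
        = ∑ l, J x i l * v l := by
      simp [Matrix.toEuclideanLin_apply, Matrix.mulVec, dotProduct]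
    have h2 : (L.comp (ContinuousLinearMap.pi D)) v i = ‖x - m i‖⁻¹ * ∑ l, (x - m i) l * v l := by
      simp [hL, hD, PiLp.inner_apply, RCLike.inner_apply]
      left
      rw [← Finset.sum_sub_distrib]
      exact Finset.sum_congr rfl fun l _ => by ring
    rw [h1, h2, Finset.mul_sum]
    refine Finset.sum_congr rfl fun l _ => ?_
    rw [hJ]
    have : (x - m i) l = x l - m i l := rfl
    rw [this]
    ring
  · intro x hx
    have hn : ∀ i, ‖x - m i‖ ≠ 0 := fun i => norm_ne_zero_iff.2 (sub_ne_zero.2 (hx i))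
    have hrow : ∀ i, J x i ≠ 0 := by
      intro i h
      apply hx i
      ext l
      have h2 : (x l - m i l) / ‖x - m i‖ = 0 := by
        rw [← hJ x i l]; exact congrFun h l
      have h3 := (div_eq_zero_iff.mp h2).resolve_right (hn i)
      linarith
    have hsubapp : ∀ (i : Fin 2) (l : Fin 3), (x - m i) l = x l - m i l := fun i l => rfl
    have hrange : Set.range (J x) = {J x 0, J x 1} := by
      ext r
      show (∃ i, J x i = r) ↔ _
      simp [Fin.exists_fin_two, eq_comm]
    constructor
    · intro hcol
      obtain ⟨c, hc⟩ := (myCollinear_iff (hx 0)).1 hcol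
      have hpt : ∀ l, x l - m 1 l = c * (x l - m 0 l) := by
        intro l
        have := congrFun (congrArg (fun z : EuclideanSpace ℝ (Fin 3) => (z : Fin 3 → ℝ)) hc) l
        simpa using this
      have hrow1 : J x 1 = (c * ‖x - m 0‖ / ‖x - m 1‖) • J x 0 := by
        funext l
        simp only [Pi.smul_apply, smul_eq_mul, hJ]
        rw [hpt l]
        field_simp [hn 0, hn 1]
      rw [Matrix.rank_eq_finrank_span_row, Matrix.row, hrange, Set.pair_comm,
        Submodule.span_insert_eq_span (Submodule.mem_span_singleton.2 ⟨_, hrow1.symm⟩)]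
      exact finrank_span_singleton (hrow 0)
    · intro hcol
      have hli : LinearIndependent ℝ (J x).row := by
        rw [linearIndependent_fin2]
        refine ⟨hrow 1, fun a ha => hcol ?_⟩
        have hane : a ≠ 0 := by
          rintro rfl
          rw [zero_smul] at ha
          exact hrow 0 ha.symm
        refine (myCollinear_iff (hx 0)).2 ⟨‖x - m 1‖ / (a * ‖x - m 0‖), ?_⟩
        ext l
        have h := congrFun ha l
        simp only [Pi.smul_apply, smul_eq_mul, Matrix.row_apply, hJ] at h
        show x l - m 1 l = _
        rw [PiLp.smul_apply, hsubapp 0 l, smul_eq_mul]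
        field_simp [hane, hn 0, hn 1] at h ⊢
        linear_combination h
      rw [Matrix.rank_eq_finrank_span_row, finrank_span_eq_card hli]
      simp
end

section
/- The map 𝒯_{3,3} is differentiable on D = ℝ³ ∖ {m₁, m₂, m₃}, with derivative at x ∈ D represented by the 3×3 matrix J(x) whose i-th row is the unit vector (x − m_i)/d_i(x). Let H be the affine span of m₁, m₂, m₃. Then: (i) if m₁, m₂, m₃ are not collinear (so H is a plane), rank J(x) = 2 for x ∈ H ∩ D and rank J(x) = 3 for x ∈ D ∖ H; (ii) if m₁, m₂, m₃ are collinear (so H is a line), rank J(x) = 1 for x ∈ H ∩ D and rank J(x) = 2 for x ∈ D ∖ H. -/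
open Submodule Module Set

section aux

variable {F : Type*} [NormedAddCommGroup F] [InnerProductSpace ℝ F]

lemma aux_norm_hasFDerivAt {x : F} (hx : x ≠ 0) :
    HasFDerivAt (fun y : F => ‖y‖) ((‖x‖⁻¹ : ℝ) • innerSL ℝ x) x := by
  have h1 : HasFDerivAt (fun y : F => ‖y‖ ^ 2) ((2 : ℕ) • innerSL ℝ x) x :=
    (hasStrictFDerivAt_norm_sq x).hasFDerivAt
  have hx2 : (‖x‖ : ℝ) ^ 2 ≠ 0 := pow_ne_zero _ (norm_ne_zero_iff.2 hx)
  have h3 := h1.sqrt hx2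
  have hfun : (fun y : F => ‖y‖) = fun y : F => Real.sqrt (‖y‖ ^ 2) := by
    funext y; rw [Real.sqrt_sq (norm_nonneg y)]
  rw [hfun]
  convert h3 using 1
  have hs : Real.sqrt (‖x‖ ^ 2) = ‖x‖ := Real.sqrt_sq (norm_nonneg x)
  ext y
  simp only [ContinuousLinearMap.coe_smul', Pi.smul_apply, ContinuousLinearMap.smul_apply, hs,
    smul_eq_mul]
  have hnx : (‖x‖ : ℝ) ≠ 0 := norm_ne_zero_iff.2 hx
  field_simp
  ring

end aux


lemma aux_finrank_span (m : Fin 3 → EuclideanSpace ℝ (Fin 3))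
    (x : EuclideanSpace ℝ (Fin 3)) (hx : ∀ i, x ≠ m i) :
    (x ∈ affineSpan ℝ (Set.range m) →
       finrank ℝ (span ℝ (Set.range fun i => x - m i)) =
         finrank ℝ (vectorSpan ℝ (Set.range m))) ∧
    (x ∉ affineSpan ℝ (Set.range m) →
       finrank ℝ (span ℝ (Set.range fun i => x - m i)) =
         finrank ℝ (vectorSpan ℝ (Set.range m)) + 1) := by
  set v : Fin 3 → EuclideanSpace ℝ (Fin 3) := fun i => x - m i with hv
  set W := vectorSpan ℝ (Set.range m) with hW
  set S := span ℝ (Set.range v) with hS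
  have hviW : ∀ i, m i - m 0 ∈ W := fun i => by
    exact
      vsub_mem_vectorSpan ℝ (Set.mem_range_self i) (Set.mem_range_self (0 : Fin 3))
  have hWS : W ≤ S := by
    rw [hW, vectorSpan_eq_span_vsub_set_right ℝ (Set.mem_range_self (0 : Fin 3)), span_le]
    rintro _ ⟨_, ⟨i, rfl⟩, rfl⟩
    have h : m i -ᵥ m 0 = v 0 - v i := by simp only [hv, vsub_eq_sub]; abel
    show m i -ᵥ m 0 ∈ S
    rw [h]
    exact sub_mem (subset_span ⟨0, rfl⟩) (subset_span ⟨i, rfl⟩)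
  have hvieq : ∀ i, v i = v 0 - (m i - m 0) := fun i => by simp only [hv]; abel
  have hmem : x ∈ affineSpan ℝ (Set.range m) ↔ v 0 ∈ W := by
    rw [← AffineSubspace.vsub_right_mem_direction_iff_mem (mem_affineSpan ℝ (Set.mem_range_self (0 : Fin 3))) x,
      direction_affineSpan, vsub_eq_sub]
  constructor
  · intro hxH
    have hv0 : v 0 ∈ W := hmem.1 hxH
    have hSW : S ≤ W := by
      rw [hS, span_le]; rintro _ ⟨i, rfl⟩
      rw [hvieq i]; exact sub_mem hv0 (hviW i)
    rw [le_antisymm hSW hWS]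
  · intro hxH
    have hv0 : v 0 ∉ W := fun h => hxH (hmem.2 h)
    have hlt : W < S := lt_of_le_of_ne hWS (fun h => hv0 (h ▸ subset_span ⟨0, rfl⟩))
    have h1 : finrank ℝ W < finrank ℝ S := Submodule.finrank_lt_finrank_of_lt hlt
    have h2 : S ≤ W ⊔ span ℝ ({v 0} : Set (EuclideanSpace ℝ (Fin 3))) := by
      rw [hS, span_le]; rintro _ ⟨i, rfl⟩
      rw [hvieq i]
      exact sub_mem (Submodule.mem_sup_right (mem_span_singleton_self _))
        (Submodule.mem_sup_left (hviW i))
    have h4 : finrank ℝ (span ℝ ({v 0} : Set (EuclideanSpace ℝ (Fin 3)))) = 1 :=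
      finrank_span_singleton (sub_ne_zero.2 (hx 0))
    have h3 : finrank ℝ S ≤ finrank ℝ W + 1 := by
      calc finrank ℝ S ≤ finrank ℝ ↥(W ⊔ span ℝ ({v 0} : Set (EuclideanSpace ℝ (Fin 3)))) := Submodule.finrank_mono h2
        _ ≤ finrank ℝ W + finrank ℝ (span ℝ ({v 0} : Set (EuclideanSpace ℝ (Fin 3)))) :=
            Submodule.finrank_add_le_finrank_add_finrank _ _
        _ = finrank ℝ W + 1 := by rw [h4]
    omega

lemma aux_rank_eq (m : Fin 3 → EuclideanSpace ℝ (Fin 3))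
    (J : EuclideanSpace ℝ (Fin 3) → Matrix (Fin 3) (Fin 3) ℝ)
    (hJ : ∀ x i l, J x i l = (x l - m i l) / ‖x - m i‖)
    (x : EuclideanSpace ℝ (Fin 3)) (hx : ∀ i, x ≠ m i) :
    (J x).rank = finrank ℝ (span ℝ (Set.range fun i => x - m i)) := by
  rw [Matrix.rank_eq_finrank_span_row]
  show finrank ℝ (span ℝ (Set.range (J x))) = _
  set c : Fin 3 → ℝ := fun i => ‖x - m i‖⁻¹ with hc
  have hc0 : ∀ i, c i ≠ 0 := fun i => inv_ne_zero (norm_ne_zero_iff.2 (sub_ne_zero.2 (hx i)))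
  set e := WithLp.linearEquiv 2 ℝ (Fin 3 → ℝ) with he
  have hrow : (J x : Fin 3 → Fin 3 → ℝ) = fun i => e.toLinearMap (c i • (x - m i)) := by
    funext i l
    rw [hJ, div_eq_inv_mul]
    rfl
  rw [hrow]
  have himg : Set.range (fun i => e.toLinearMap (c i • (x - m i))) =
      e.toLinearMap '' (Set.range (fun i => c i • (x - m i))) := by
    rw [← Set.range_comp]; rfl
  have hspan : span ℝ (Set.range fun i => c i • (x - m i)) =
      span ℝ (Set.range fun i => x - m i) := by
    apply le_antisymm
    · rw [span_le]; rintro _ ⟨i, rfl⟩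
      exact Submodule.smul_mem _ _ (subset_span ⟨i, rfl⟩)
    · rw [span_le]; rintro _ ⟨i, rfl⟩
      show x - m i ∈ _
      rw [← inv_smul_smul₀ (hc0 i) (x - m i)]
      exact Submodule.smul_mem _ _ (subset_span ⟨i, rfl⟩)
  rw [himg, ← Submodule.map_span, hspan, LinearEquiv.finrank_map_eq]

lemma aux_vs_noncol (m : Fin 3 → EuclideanSpace ℝ (Fin 3))
    (hcol : ¬ Collinear ℝ (Set.range m)) :
    finrank ℝ (vectorSpan ℝ (Set.range m)) = 2 :=
  (affineIndependent_iff_not_collinear.2 hcol).finrank_vectorSpan (by simp)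

lemma aux_vs_col (m : Fin 3 → EuclideanSpace ℝ (Fin 3)) (hm : Function.Injective m)
    (hcol : Collinear ℝ (Set.range m)) :
    finrank ℝ (vectorSpan ℝ (Set.range m)) = 1 := by
  have h1 : finrank ℝ (vectorSpan ℝ (Set.range m)) ≤ 1 :=
    collinear_iff_finrank_le_one.1 hcol
  have hne : m 1 - m 0 ≠ 0 := sub_ne_zero.2 (hm.ne (by decide))
  have hmem : m 1 - m 0 ∈ vectorSpan ℝ (Set.range m) := by
    exact
      vsub_mem_vectorSpan ℝ (Set.mem_range_self 1) (Set.mem_range_self (0 : Fin 3))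
  have h2 : 1 ≤ finrank ℝ (vectorSpan ℝ (Set.range m)) := by
    have := Submodule.finrank_mono (span_le.2 (Set.singleton_subset_iff.2 hmem))
    rwa [finrank_span_singleton hne] at this
  omega

lemma aux_deriv (m : Fin 3 → EuclideanSpace ℝ (Fin 3))
    (J : EuclideanSpace ℝ (Fin 3) → Matrix (Fin 3) (Fin 3) ℝ)
    (hJ : ∀ x i l, J x i l = (x l - m i l) / ‖x - m i‖)
    (T : EuclideanSpace ℝ (Fin 3) → EuclideanSpace ℝ (Fin 3))
    (hT : ∀ x i, T x i = ‖x - m i‖)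
    (x : EuclideanSpace ℝ (Fin 3)) (hx : ∀ i, x ≠ m i) :
    HasFDerivAt T (LinearMap.toContinuousLinearMap (Matrix.toEuclideanLin (J x))) x := by
  set e := PiLp.continuousLinearEquiv 2 ℝ (fun _ : Fin 3 => ℝ) with he
  set D : Fin 3 → (EuclideanSpace ℝ (Fin 3) →L[ℝ] ℝ) :=
    fun i => ‖x - m i‖⁻¹ • (innerSL ℝ (x - m i)) with hD
  have hci : ∀ i, HasFDerivAt (fun y : EuclideanSpace ℝ (Fin 3) => ‖y - m i‖) (D i) x := by
    intro i
    have h0 : x - m i ≠ 0 := sub_ne_zero.2 (hx i)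
    have h1 := (aux_norm_hasFDerivAt h0).comp x ((hasFDerivAt_id x).sub_const (m i))
    have h2 : HasFDerivAt (fun y : EuclideanSpace ℝ (Fin 3) => ‖y - m i‖)
        ((‖x - m i‖⁻¹ • innerSL ℝ (x - m i)).comp
          (ContinuousLinearMap.id ℝ (EuclideanSpace ℝ (Fin 3)))) x := h1
    rwa [ContinuousLinearMap.comp_id] at h2
  have hD' : HasFDerivAt (fun y : EuclideanSpace ℝ (Fin 3) => fun i => ‖y - m i‖)
      (ContinuousLinearMap.pi D) x :=
    hasFDerivAt_pi.2 hci
  have hfe : (⇑e ∘ T) =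
      fun y : EuclideanSpace ℝ (Fin 3) => fun i => ‖y - m i‖ := by
    funext y i
    exact hT y i
  have hEq : (e : EuclideanSpace ℝ (Fin 3) →L[ℝ] (Fin 3 → ℝ)).comp
      (LinearMap.toContinuousLinearMap (Matrix.toEuclideanLin (J x))) =
      ContinuousLinearMap.pi D := by
    ext v i
    show (Matrix.toEuclideanLin (J x) v : EuclideanSpace ℝ (Fin 3)) i = D i v
    have hL : (Matrix.toEuclideanLin (J x) v : EuclideanSpace ℝ (Fin 3)) i
        = ∑ l, J x i l * v l := rfl
    rw [hL, hD]
    simp only [ContinuousLinearMap.coe_smul', Pi.smul_apply, innerSL_apply_apply, smul_eq_mul,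
      PiLp.inner_apply, RCLike.inner_apply, conj_trivial]
    rw [Finset.mul_sum]
    refine Finset.sum_congr rfl fun l _ => ?_
    rw [hJ, div_eq_inv_mul]
    show ‖x - m i‖⁻¹ * (x l - m i l) * v l = ‖x - m i‖⁻¹ * (v l * (x l - m i l))
    ring
  exact e.comp_hasFDerivAt_iff.mp (by rw [hfe, hEq]; exact hD')


/-- 𝒯_{3,3} is differentiable on ℝ³ ∖ {m₁,m₂,m₃} with Jacobian J(x)
whose i-th row is (x − mᵢ)/dᵢ(x); with H the affine span of the receivers, the rank
of J(x) is as described depending on whether the receivers are collinear and whether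
x ∈ H. -/
theorem stmt18 (m : Fin 3 → EuclideanSpace ℝ (Fin 3)) (hm : Function.Injective m)
    (J : EuclideanSpace ℝ (Fin 3) → Matrix (Fin 3) (Fin 3) ℝ)
    (hJ : ∀ x i l, J x i l = (x l - m i l) / ‖x - m i‖)
    (T : EuclideanSpace ℝ (Fin 3) → EuclideanSpace ℝ (Fin 3))
    (hT : ∀ x i, T x i = ‖x - m i‖) :
    (∀ x : EuclideanSpace ℝ (Fin 3), (∀ i, x ≠ m i) →
      HasFDerivAt T (LinearMap.toContinuousLinearMap (Matrix.toEuclideanLin (J x))) x) ∧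
    (¬ Collinear ℝ (Set.range m) →
      ∀ x : EuclideanSpace ℝ (Fin 3), (∀ i, x ≠ m i) →
        ((x ∈ affineSpan ℝ (Set.range m) → (J x).rank = 2) ∧
         (x ∉ affineSpan ℝ (Set.range m) → (J x).rank = 3))) ∧
    (Collinear ℝ (Set.range m) →
      ∀ x : EuclideanSpace ℝ (Fin 3), (∀ i, x ≠ m i) →
        ((x ∈ affineSpan ℝ (Set.range m) → (J x).rank = 1) ∧
         (x ∉ affineSpan ℝ (Set.range m) → (J x).rank = 2))) := by
  refine ⟨fun x hx => aux_deriv m J hJ T hT x hx, ?_, ?_⟩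
  · intro hcol x hx
    have h := aux_finrank_span m x hx
    have hr := aux_rank_eq m J hJ x hx
    have hw := aux_vs_noncol m hcol
    exact ⟨fun hxH => by rw [hr, h.1 hxH, hw], fun hxH => by rw [hr, h.2 hxH, hw]⟩
  · intro hcol x hx
    have h := aux_finrank_span m x hx
    have hr := aux_rank_eq m J hJ x hx
    have hw := aux_vs_col m hm hcol
    exact ⟨fun hxH => by rw [hr, h.1 hxH, hw], fun hxH => by rw [hr, h.2 hxH, hw]⟩
end

section
/- Let m₁, m₂, m₃ ∈ ℝ³ be non-collinear and let H be the plane they affinely span. Then: (i) for every x ∈ ℝ³, F(d₁(x), d₂(x), d₃(x)) ≤ 0, with equality if and only if x ∈ H; (ii) for every x ∈ ℝ³, the fiber 𝒯_{3,3}⁻¹(𝒯_{3,3}(x)) has exactly one element if x ∈ H, and exactly two elements — mirror images of each other in the plane H — if x ∉ H. -/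
open RealInnerProductSpace

private lemma stmt19_norm_sq (p : EuclideanSpace ℝ (Fin 3)) : ‖p‖ ^ 2 = ⟪p, p⟫ :=
  (real_inner_self_eq_norm_sq p).symm

private lemma stmt19_norm_eq_iff (p q : EuclideanSpace ℝ (Fin 3)) :
    ‖p‖ = ‖q‖ ↔ ⟪p, p⟫ = ⟪q, q⟫ := by
  rw [← stmt19_norm_sq, ← stmt19_norm_sq]
  constructor
  · intro h; rw [h]
  · intro h
    have := congrArg Real.sqrt h
    rwa [Real.sqrt_sq (norm_nonneg p), Real.sqrt_sq (norm_nonneg q)] at this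

private lemma stmt19_gram (a u v : EuclideanSpace ℝ (Fin 3)) :
    ‖v - u‖ ^ 2 * ‖a‖ ^ 4 + ‖v‖ ^ 2 * ‖a - u‖ ^ 4 + ‖u‖ ^ 2 * ‖a - v‖ ^ 4
      - 2 * ⟪v - u, v⟫ * ‖a‖ ^ 2 * ‖a - u‖ ^ 2
      + 2 * ⟪v - u, u⟫ * ‖a‖ ^ 2 * ‖a - v‖ ^ 2
      - 2 * ⟪v, u⟫ * ‖a - u‖ ^ 2 * ‖a - v‖ ^ 2
      - 2 * ⟪u, v⟫ * ‖v - u‖ ^ 2 * ‖a‖ ^ 2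
      + 2 * ⟪v - u, u⟫ * ‖v‖ ^ 2 * ‖a - u‖ ^ 2
      - 2 * ⟪v - u, v⟫ * ‖u‖ ^ 2 * ‖a - v‖ ^ 2
      + ‖u‖ ^ 2 * ‖v‖ ^ 2 * ‖v - u‖ ^ 2
    = -4 * (⟪a, a⟫ * (⟪u, u⟫ * ⟪v, v⟫ - ⟪u, v⟫ ^ 2)
        - ⟪a, u⟫ ^ 2 * ⟪v, v⟫ + 2 * ⟪a, u⟫ * ⟪a, v⟫ * ⟪u, v⟫ - ⟪a, v⟫ ^ 2 * ⟪u, u⟫) := by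
  have h4 : ∀ p : EuclideanSpace ℝ (Fin 3), ‖p‖ ^ 4 = ⟪p, p⟫ ^ 2 := by
    intro p; rw [show (4 : ℕ) = 2 * 2 from rfl, pow_mul, stmt19_norm_sq]
  simp only [h4, stmt19_norm_sq]
  simp only [inner_sub_left, inner_sub_right]
  rw [real_inner_comm a u, real_inner_comm a v, real_inner_comm u v]
  ring

private lemma stmt19_gram_fact (u v w : EuclideanSpace ℝ (Fin 3)) (α β : ℝ)
    (h1 : ⟪w, u⟫ = 0) (h2 : ⟪w, v⟫ = 0) :
    ⟪α • u + β • v + w, α • u + β • v + w⟫ * (⟪u, u⟫ * ⟪v, v⟫ - ⟪u, v⟫ ^ 2)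
      - ⟪α • u + β • v + w, u⟫ ^ 2 * ⟪v, v⟫
      + 2 * ⟪α • u + β • v + w, u⟫ * ⟪α • u + β • v + w, v⟫ * ⟪u, v⟫
      - ⟪α • u + β • v + w, v⟫ ^ 2 * ⟪u, u⟫
    = ⟪w, w⟫ * (⟪u, u⟫ * ⟪v, v⟫ - ⟪u, v⟫ ^ 2) := by
  simp only [inner_add_left, inner_add_right, inner_smul_left, inner_smul_right,
    starRingEnd_apply, star_trivial]
  rw [real_inner_comm u v, real_inner_comm w u, real_inner_comm w v, h1, h2]
  ring

private lemma stmt19_cancel (a c u : EuclideanSpace ℝ (Fin 3))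
    (h1 : ⟪a + c, a + c⟫ = ⟪a, a⟫)
    (h2 : ⟪a + c - u, a + c - u⟫ = ⟪a - u, a - u⟫) : ⟪c, u⟫ = 0 := by
  simp only [inner_add_left, inner_add_right, inner_sub_left, inner_sub_right] at h1 h2
  rw [real_inner_comm a c] at h1 h2
  rw [real_inner_comm a u, real_inner_comm c u] at h2
  linarith

private lemma stmt19_key (a c : EuclideanSpace ℝ (Fin 3))
    (h1 : ⟪a + c, a + c⟫ = ⟪a, a⟫) : 2 * ⟪a, c⟫ + ⟪c, c⟫ = 0 := by
  simp only [inner_add_left, inner_add_right] at h1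
  rw [real_inner_comm a c] at h1
  linarith

private lemma stmt19_rev (a c u : EuclideanSpace ℝ (Fin 3))
    (h1 : 2 * ⟪a, c⟫ + ⟪c, c⟫ = 0) (h2 : ⟪c, u⟫ = 0) :
    ⟪a + c - u, a + c - u⟫ = ⟪a - u, a - u⟫ := by
  simp only [inner_add_left, inner_add_right, inner_sub_left, inner_sub_right]
  rw [real_inner_comm a c, real_inner_comm a u, real_inner_comm c u, h2]
  linarith

private lemma stmt19_rev0 (a c : EuclideanSpace ℝ (Fin 3))
    (h1 : 2 * ⟪a, c⟫ + ⟪c, c⟫ = 0) : ⟪a + c, a + c⟫ = ⟪a, a⟫ := by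
  simp only [inner_add_left, inner_add_right]
  rw [real_inner_comm a c]; linarith

set_option maxHeartbeats 1000000 in
/-- for non-collinear receivers in ℝ³ spanning the plane H:
(i) F(d₁(x),d₂(x),d₃(x)) ≤ 0 with equality iff x ∈ H; (ii) the fiber of 𝒯_{3,3}
through x is {x} if x ∈ H, and otherwise consists of exactly two points which are
mirror images of each other in the plane H. -/
theorem stmt19 (m₁ m₂ m₃ : EuclideanSpace ℝ (Fin 3))
    (hd12 : m₁ ≠ m₂) (hd13 : m₁ ≠ m₃) (hd23 : m₂ ≠ m₃)
    (hnc : ¬ Collinear ℝ ({m₁, m₂, m₃} : Set (EuclideanSpace ℝ (Fin 3))))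
    (F : ℝ → ℝ → ℝ → ℝ)
    (hF : ∀ T₁ T₂ T₃, F T₁ T₂ T₃ =
      ‖m₃ - m₂‖ ^ 2 * T₁ ^ 4 + ‖m₃ - m₁‖ ^ 2 * T₂ ^ 4 + ‖m₂ - m₁‖ ^ 2 * T₃ ^ 4
      - 2 * (inner ℝ (m₃ - m₂) (m₃ - m₁) : ℝ) * T₁ ^ 2 * T₂ ^ 2
      + 2 * (inner ℝ (m₃ - m₂) (m₂ - m₁) : ℝ) * T₁ ^ 2 * T₃ ^ 2
      - 2 * (inner ℝ (m₃ - m₁) (m₂ - m₁) : ℝ) * T₂ ^ 2 * T₃ ^ 2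
      - 2 * (inner ℝ (m₂ - m₁) (m₃ - m₁) : ℝ) * ‖m₃ - m₂‖ ^ 2 * T₁ ^ 2
      + 2 * (inner ℝ (m₃ - m₂) (m₂ - m₁) : ℝ) * ‖m₃ - m₁‖ ^ 2 * T₂ ^ 2
      - 2 * (inner ℝ (m₃ - m₂) (m₃ - m₁) : ℝ) * ‖m₂ - m₁‖ ^ 2 * T₃ ^ 2
      + ‖m₂ - m₁‖ ^ 2 * ‖m₃ - m₁‖ ^ 2 * ‖m₃ - m₂‖ ^ 2)
    (T : EuclideanSpace ℝ (Fin 3) → ℝ × ℝ × ℝ)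
    (hT : ∀ x, T x = (‖x - m₁‖, ‖x - m₂‖, ‖x - m₃‖))
    (H : AffineSubspace ℝ (EuclideanSpace ℝ (Fin 3)))
    (hH : H = affineSpan ℝ ({m₁, m₂, m₃} : Set (EuclideanSpace ℝ (Fin 3)))) :
    (∀ x : EuclideanSpace ℝ (Fin 3),
      F ‖x - m₁‖ ‖x - m₂‖ ‖x - m₃‖ ≤ 0 ∧
      (F ‖x - m₁‖ ‖x - m₂‖ ‖x - m₃‖ = 0 ↔ x ∈ H)) ∧
    (∀ x : EuclideanSpace ℝ (Fin 3),
      (x ∈ H → T ⁻¹' {T x} = {x}) ∧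
      (x ∉ H → ∃ y : EuclideanSpace ℝ (Fin 3), y ≠ x ∧ T ⁻¹' {T x} = {x, y} ∧
        midpoint ℝ x y ∈ H ∧ ∀ v ∈ H.direction, (inner ℝ (x - y) v : ℝ) = 0)) := by
  classical
  have hsub32 : m₃ - m₂ = (m₃ - m₁) - (m₂ - m₁) := by abel
  set u : EuclideanSpace ℝ (Fin 3) := m₂ - m₁ with hu
  set v : EuclideanSpace ℝ (Fin 3) := m₃ - m₁ with hv
  set K : Submodule ℝ (EuclideanSpace ℝ (Fin 3)) := Submodule.span ℝ {u, v} with hK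
  have huK : u ∈ K := Submodule.subset_span (by simp)
  have hvK : v ∈ K := Submodule.subset_span (by simp)
  have hu0 : u ≠ 0 := sub_ne_zero.mpr (Ne.symm hd12)
  have himg : (fun p => p -ᵥ m₁) '' ({m₁, m₂, m₃} : Set (EuclideanSpace ℝ (Fin 3)))
      = {0, u, v} := by
    simp [Set.image_insert_eq, vsub_eq_sub, hu, hv]
  have hspan : vectorSpan ℝ ({m₁, m₂, m₃} : Set (EuclideanSpace ℝ (Fin 3))) = K := by
    rw [vectorSpan_eq_span_vsub_set_right ℝ
      (show m₁ ∈ ({m₁, m₂, m₃} : Set (EuclideanSpace ℝ (Fin 3))) by simp), himg,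
      Submodule.span_insert_zero]
  have hm1H : m₁ ∈ H := by rw [hH]; exact mem_affineSpan ℝ (by simp)
  have hdir : H.direction = K := by rw [hH, direction_affineSpan, hspan]
  have hmemH : ∀ z : EuclideanSpace ℝ (Fin 3), z ∈ H ↔ z - m₁ ∈ K := by
    intro z
    constructor
    · intro hz
      have h := AffineSubspace.vsub_mem_direction hz hm1H
      rw [hdir] at h
      simpa [vsub_eq_sub] using h
    · intro hz
      have h := AffineSubspace.vadd_mem_of_mem_direction (hdir ▸ hz) hm1H
      simpa [vadd_eq_add, sub_add_cancel] using h
  have hKfr : 2 ≤ Module.finrank ℝ K := by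
    rw [collinear_iff_finrank_le_one, hspan] at hnc
    omega
  have hG : 0 < ⟪u, u⟫ * ⟪v, v⟫ - ⟪u, v⟫ ^ 2 := by
    have hcs : ⟪u, v⟫ ^ 2 ≤ ⟪u, u⟫ * ⟪v, v⟫ := by
      have := real_inner_mul_inner_self_le u v; nlinarith
    rcases lt_or_eq_of_le hcs with h | h
    · linarith
    · exfalso
      have hUpos : (0 : ℝ) < ⟪u, u⟫ :=
        lt_of_le_of_ne real_inner_self_nonneg (Ne.symm (inner_self_ne_zero.mpr hu0))
      have hz : ⟪u, u⟫ • v - ⟪u, v⟫ • u = 0 := by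
        rw [← inner_self_eq_zero (𝕜 := ℝ)]
        simp only [inner_sub_left, inner_sub_right, inner_smul_left, inner_smul_right,
          starRingEnd_apply, star_trivial]
        rw [real_inner_comm u v]
        nlinarith
      have hveq : v = (⟪u, u⟫)⁻¹ • ⟪u, v⟫ • u := by
        have h2 : ⟪u, u⟫ • v = ⟪u, v⟫ • u := by rwa [sub_eq_zero] at hz
        rw [← h2, inv_smul_smul₀ (ne_of_gt hUpos)]
      have hle : K ≤ Submodule.span ℝ {u} := by
        rw [hK, Submodule.span_le]
        intro z hz2
        simp only [Set.mem_insert_iff, Set.mem_singleton_iff] at hz2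
        rcases hz2 with rfl | rfl
        · exact Submodule.mem_span_singleton_self _
        · rw [hveq]
          exact Submodule.smul_mem _ _
            (Submodule.smul_mem _ _ (Submodule.mem_span_singleton_self u))
      have hfr := Submodule.finrank_mono hle
      rw [finrank_span_singleton hu0] at hfr
      omega
  have hperp1 : Module.finrank ℝ Kᗮ ≤ 1 := by
    have h := Submodule.finrank_add_finrank_orthogonal K
    rw [finrank_euclideanSpace_fin] at h
    omega
  have hdecomp : ∀ a : EuclideanSpace ℝ (Fin 3), ∃ k w, k ∈ K ∧ w ∈ Kᗮ ∧ a = k + w :=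
    fun a => ⟨K.orthogonalProjection a, a - K.orthogonalProjection a,
      (K.orthogonalProjection a).2, K.sub_starProjection_mem_orthogonal a, by abel⟩
  have hcperp : ∀ c : EuclideanSpace ℝ (Fin 3), ⟪c, u⟫ = 0 → ⟪c, v⟫ = 0 → c ∈ Kᗮ := by
    intro c h1 h2
    have h : K ≤ (Submodule.span ℝ {c})ᗮ := by
      rw [hK, Submodule.span_le]
      intro z hz
      simp only [Set.mem_insert_iff, Set.mem_singleton_iff] at hz
      rcases hz with rfl | rfl
      · exact Submodule.mem_orthogonal_singleton_iff_inner_right.mpr h1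
      · exact Submodule.mem_orthogonal_singleton_iff_inner_right.mpr h2
    exact Submodule.orthogonal_le h
      (Submodule.le_orthogonal_orthogonal _ (Submodule.mem_span_singleton_self c))
  -- value of F
  have hFval : ∀ (k w x : EuclideanSpace ℝ (Fin 3)), k ∈ K → w ∈ Kᗮ → x - m₁ = k + w →
      F ‖x - m₁‖ ‖x - m₂‖ ‖x - m₃‖
        = -4 * (⟪w, w⟫ * (⟪u, u⟫ * ⟪v, v⟫ - ⟪u, v⟫ ^ 2)) := by
    intro k w x hk hw hx
    obtain ⟨α, β, hαβ⟩ := Submodule.mem_span_pair.mp (hK ▸ hk)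
    have hx2 : x - m₂ = x - m₁ - u := by rw [hu]; abel
    have hx3 : x - m₃ = x - m₁ - v := by rw [hv]; abel
    have ha : x - m₁ = α • u + β • v + w := by rw [hx, ← hαβ]
    rw [hF, hx2, hx3, hsub32, stmt19_gram (x - m₁) u v, ha,
      stmt19_gram_fact u v w α β (Submodule.inner_left_of_mem_orthogonal huK hw)
        (Submodule.inner_left_of_mem_orthogonal hvK hw)]
  -- fiber characterization
  have hfib : ∀ x z : EuclideanSpace ℝ (Fin 3), T z = T x ↔
      (⟪z - x, u⟫ = 0 ∧ ⟪z - x, v⟫ = 0 ∧ 2 * ⟪x - m₁, z - x⟫ + ⟪z - x, z - x⟫ = 0) := by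
    intro x z
    rw [hT z, hT x, Prod.ext_iff, Prod.ext_iff]
    dsimp only
    rw [stmt19_norm_eq_iff, stmt19_norm_eq_iff, stmt19_norm_eq_iff]
    have hz1 : z - m₁ = x - m₁ + (z - x) := by abel
    have hz2 : z - m₂ = x - m₁ + (z - x) - u := by rw [hu]; abel
    have hz3 : z - m₃ = x - m₁ + (z - x) - v := by rw [hv]; abel
    have hx2 : x - m₂ = x - m₁ - u := by rw [hu]; abel
    have hx3 : x - m₃ = x - m₁ - v := by rw [hv]; abel
    rw [hz1, hz2, hz3, hx2, hx3]
    constructor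
    · rintro ⟨e1, e2, e3⟩
      exact ⟨stmt19_cancel _ _ _ e1 e2, stmt19_cancel _ _ _ e1 e3, stmt19_key _ _ e1⟩
    · rintro ⟨o1, o2, okey⟩
      exact ⟨stmt19_rev0 _ _ okey, stmt19_rev _ _ _ okey o1, stmt19_rev _ _ _ okey o2⟩
  constructor
  · -- part (i)
    intro x
    obtain ⟨k, w, hk, hw, hx⟩ := hdecomp (x - m₁)
    have hval := hFval k w x hk hw hx
    have hww : (0 : ℝ) ≤ ⟪w, w⟫ := real_inner_self_nonneg
    constructor
    · rw [hval]; nlinarith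
    · rw [hval]
      constructor
      · intro h0
        have hs : ⟪w, w⟫ * (⟪u, u⟫ * ⟪v, v⟫ - ⟪u, v⟫ ^ 2) = 0 := by linarith
        have : ⟪w, w⟫ = (0 : ℝ) := by
          rcases mul_eq_zero.mp hs with h | h
          · exact h
          · exact absurd h (ne_of_gt hG)
        have hw0 : w = 0 := (inner_self_eq_zero (𝕜 := ℝ)).mp this
        rw [hmemH, hx, hw0, add_zero]
        exact hk
      · intro hxH
        have haK : x - m₁ ∈ K := (hmemH x).mp hxH
        have hwK : w ∈ K := by
          have hwk : w = x - m₁ - k := by rw [hx]; abel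
          rw [hwk]; exact K.sub_mem haK hk
        have hw0 : w = 0 :=
          (inner_self_eq_zero (𝕜 := ℝ)).mp (Submodule.inner_right_of_mem_orthogonal hwK hw)
        rw [hw0]
        simp
  · -- part (ii)
    intro x
    obtain ⟨k, w, hk, hw, hx⟩ := hdecomp (x - m₁)
    constructor
    · intro hxH
      apply Set.eq_singleton_iff_unique_mem.mpr
      refine ⟨by simp, ?_⟩
      intro z hz
      rw [Set.mem_preimage, Set.mem_singleton_iff] at hz
      obtain ⟨o1, o2, okey⟩ := (hfib x z).mp hz
      have hcK := hcperp _ o1 o2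
      have haK : x - m₁ ∈ K := (hmemH x).mp hxH
      have h0 : ⟪x - m₁, z - x⟫ = 0 := Submodule.inner_right_of_mem_orthogonal haK hcK
      rw [h0] at okey
      have hc0 : z - x = 0 := (inner_self_eq_zero (𝕜 := ℝ)).mp (by linarith)
      exact sub_eq_zero.mp hc0
    · intro hxH
      have hw0 : w ≠ 0 := by
        intro h0
        exact hxH (by rw [hmemH, hx, h0, add_zero]; exact hk)
      have hle : Submodule.span ℝ {w} ≤ Kᗮ := by
        rw [Submodule.span_le]
        intro z hz
        rcases hz with rfl
        exact hw
      have hKperp : Submodule.span ℝ {w} = Kᗮ :=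
        Submodule.eq_of_le_of_finrank_le hle
          (by rw [finrank_span_singleton hw0]; exact hperp1)
      set y : EuclideanSpace ℝ (Fin 3) := x - (2 : ℝ) • w with hy
      have hyx : y ≠ x := by
        intro h
        apply hw0
        have h2 : (2 : ℝ) • w = 0 := by
          have := sub_eq_self.mp (hy ▸ h)
          exact this
        simpa using h2
      have hcwu : ⟪w, u⟫ = 0 := Submodule.inner_left_of_mem_orthogonal huK hw
      have hcwv : ⟪w, v⟫ = 0 := Submodule.inner_left_of_mem_orthogonal hvK hw
      have haw : ⟪x - m₁, w⟫ = ⟪w, w⟫ := by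
        rw [hx, inner_add_left, Submodule.inner_right_of_mem_orthogonal hk hw, zero_add]
      have hyxm : y - x = (-2 : ℝ) • w := by
        rw [hy, neg_smul]
        abel
      have hyfib : T y = T x := by
        rw [hfib x y, hyxm]
        refine ⟨?_, ?_, ?_⟩
        · rw [real_inner_smul_left, hcwu, mul_zero]
        · rw [real_inner_smul_left, hcwv, mul_zero]
        · rw [real_inner_smul_right, real_inner_smul_left, real_inner_smul_right, haw]
          ring
      refine ⟨y, hyx, ?_, ?_, ?_⟩
      · ext z
        rw [Set.mem_preimage, Set.mem_singleton_iff, Set.mem_insert_iff,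
          Set.mem_singleton_iff]
        constructor
        · intro hz
          obtain ⟨o1, o2, okey⟩ := (hfib x z).mp hz
          have hcK := hcperp _ o1 o2
          rw [← hKperp] at hcK
          obtain ⟨t, ht⟩ := Submodule.mem_span_singleton.mp hcK
          have haw2 : ⟪x - m₁, z - x⟫ = t * ⟪w, w⟫ := by
            rw [← ht, real_inner_smul_right, haw]
          have hcc : ⟪z - x, z - x⟫ = t ^ 2 * ⟪w, w⟫ := by
            rw [← ht, real_inner_smul_left, real_inner_smul_right]
            ring
          have hww0 : ⟪w, w⟫ ≠ (0 : ℝ) := fun h => hw0 ((inner_self_eq_zero (𝕜 := ℝ)).mp h)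
          have hfac : (t * (2 + t)) * ⟪w, w⟫ = 0 := by
            rw [haw2, hcc] at okey
            nlinarith [okey]
          have ht2 : t = 0 ∨ t = -2 := by
            rcases mul_eq_zero.mp hfac with h | h
            · rcases mul_eq_zero.mp h with h' | h'
              · exact Or.inl h'
              · exact Or.inr (by linarith)
            · exact absurd h hww0
          rcases ht2 with rfl | rfl
          · left
            have : z - x = 0 := by rw [← ht, zero_smul]
            exact sub_eq_zero.mp this
          · right
            have hzx : z - x = (-2 : ℝ) • w := ht.symm
            have : z - x = y - x := by rw [hzx, hyxm]
            exact sub_left_injective this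
        · rintro (rfl | rfl)
          · rfl
          · exact hyfib
      · have hmid : midpoint ℝ x y = x - w := by
          rw [hy, midpoint_eq_smul_add]
          match_scalars <;> norm_num
        rw [hmid, hmemH]
        have hxw : x - w - m₁ = k := by
          rw [show x - w - m₁ = x - m₁ - w by abel, hx]
          abel
        rw [hxw]
        exact hk
      · intro vv hvv
        rw [hdir] at hvv
        have hxy : x - y = (2 : ℝ) • w := by rw [hy]; abel
        rw [hxy, real_inner_smul_left, Submodule.inner_left_of_mem_orthogonal hvv hw,
          mul_zero]
end
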